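/- arXiv:1206.4723 — 7 statements merged into one kernel-verified Lean document; each statement's English description precedes it below -/
import Mathlib

section
/- Let K ≥ 1 and for each l ∈ {1,…,K} let λ_l > 0, P_l > 0, B_l > 0, ε_l > 2 and m_l > 0 be given, and set a_l = λ_l·π·(P_l B_l)^{2/ε_l}·m_l. Let R₁,…,R_K be independent nonnegative random variables such that P(R_l > r) = exp(−a_l·r^{2/ε_l}) for all r ≥ 0 and all l. Then for every k ∈ {1,…,K}, the probability that R_k is strictly smaller than all the other variables satisfies P(R_k < R_l for all l ≠ k) = ∫_0^∞ λ_k·m_k·2π·t·exp(−Σ_{l=1}^K λ_l·m_l·π·(P_l B_l/(P_k B_k))^{2/ε_l}·t^{2ε_k/ε_l}) dt. -/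
open MeasureTheory ProbabilityTheory Real

open Set

namespace Stmt1Aux

noncomputable def dens (a p x : ℝ) : ℝ := a * p * x ^ (p - 1) * Real.exp (-(a * x ^ p))

lemma dens_nonneg {a p x : ℝ} (ha : 0 ≤ a) (hp : 0 ≤ p) (hx : 0 ≤ x) : 0 ≤ dens a p x :=
  mul_nonneg (mul_nonneg (mul_nonneg ha hp) (Real.rpow_nonneg hx _)) (Real.exp_pos _).le

lemma measurable_dens (a p : ℝ) : Measurable (dens a p) := by
  unfold dens
  fun_prop

lemma hasDerivAt_neg_exp {a p : ℝ} {x : ℝ} (hx : 0 < x) :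
    HasDerivAt (fun y : ℝ => -Real.exp (-(a * y ^ p))) (dens a p x) x := by
  have h1 : HasDerivAt (fun y : ℝ => y ^ p) (p * x ^ (p - 1)) x :=
    Real.hasDerivAt_rpow_const (Or.inl hx.ne')
  have h4 : HasDerivAt (fun y : ℝ => -Real.exp (-(a * y ^ p)))
      (-(Real.exp (-(a * x ^ p)) * -(a * (p * x ^ (p - 1))))) x :=
    (((h1.const_mul a).neg).exp).neg
  convert h4 using 1
  simp [dens]
  ring

lemma continuous_neg_exp {a p : ℝ} (hp : 0 < p) (c : ℝ) :
    ContinuousWithinAt (fun y : ℝ => -Real.exp (-(a * y ^ p))) (Ici c) c := by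
  apply ContinuousAt.continuousWithinAt
  have h : ContinuousAt (fun y : ℝ => y ^ p) c := Real.continuousAt_rpow_const c p (Or.inr hp.le)
  exact (Real.continuous_exp.continuousAt.comp ((h.const_mul a).neg)).neg

lemma tendsto_neg_exp {a p : ℝ} (ha : 0 < a) (hp : 0 < p) :
    Filter.Tendsto (fun y : ℝ => -Real.exp (-(a * y ^ p))) Filter.atTop (nhds 0) := by
  have h1 : Filter.Tendsto (fun y : ℝ => a * y ^ p) Filter.atTop Filter.atTop :=
    (tendsto_rpow_atTop hp).const_mul_atTop ha
  have h2 := Real.tendsto_exp_neg_atTop_nhds_zero.comp h1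
  have h3 := h2.neg
  simp only [Function.comp, neg_zero] at h3
  exact h3

lemma integrableOn_dens {a p : ℝ} (ha : 0 < a) (hp : 0 < p) {c : ℝ} (hc : 0 ≤ c) :
    IntegrableOn (dens a p) (Ioi c) :=
  integrableOn_Ioi_deriv_of_nonneg (continuous_neg_exp hp c)
    (fun _ hx => hasDerivAt_neg_exp (lt_of_le_of_lt hc hx))
    (fun _ hx => dens_nonneg ha.le hp.le (hc.trans hx.le))
    (tendsto_neg_exp ha hp)

lemma integral_dens {a p : ℝ} (ha : 0 < a) (hp : 0 < p) {c : ℝ} (hc : 0 ≤ c) :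
    ∫ x in Ioi c, dens a p x = Real.exp (-(a * c ^ p)) := by
  have h := integral_Ioi_of_hasDerivAt_of_tendsto (continuous_neg_exp hp c)
    (fun _ hx => hasDerivAt_neg_exp (lt_of_le_of_lt hc hx))
    (integrableOn_dens ha hp hc) (tendsto_neg_exp ha hp)
  simpa using h


lemma measure_eq_withDensity {a p : ℝ} (ha : 0 < a) (hp : 0 < p)
    (μ : Measure ℝ) [IsProbabilityMeasure μ]
    (htail : ∀ r : ℝ, 0 ≤ r → μ (Ioi r) = ENNReal.ofReal (Real.exp (-(a * r ^ p)))) :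
    μ = (volume.restrict (Ioi 0)).withDensity (fun x => ENNReal.ofReal (dens a p x)) := by
  set ν := (volume.restrict (Ioi (0:ℝ))).withDensity (fun x => ENNReal.ofReal (dens a p x))
    with hν
  have hνIoi : ∀ r : ℝ, 0 ≤ r → ν (Ioi r) = ENNReal.ofReal (Real.exp (-(a * r ^ p))) := by
    intro r hr
    rw [hν, withDensity_apply _ measurableSet_Ioi, Measure.restrict_restrict measurableSet_Ioi]
    have h1 : Ioi r ∩ Ioi (0:ℝ) = Ioi r := by
      rw [Set.Ioi_inter_Ioi, max_eq_left hr]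
    rw [h1, ← ofReal_integral_eq_lintegral_ofReal (integrableOn_dens ha hp hr)
      ((ae_restrict_iff' measurableSet_Ioi).2 (Filter.Eventually.of_forall
        fun x hx => dens_nonneg ha.le hp.le (hr.trans hx.le))),
      integral_dens ha hp hr]
  have hzero : (0:ℝ) ^ p = 0 := Real.zero_rpow hp.ne'
  have hνIic0 : ∀ r : ℝ, r ≤ 0 → ν (Iic r) = 0 := by
    intro r hr
    rw [hν, withDensity_apply _ measurableSet_Iic, Measure.restrict_restrict measurableSet_Iic]
    have h1 : Iic r ∩ Ioi (0:ℝ) = ∅ := by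
      ext x; simp only [Set.mem_inter_iff, Set.mem_Iic, Set.mem_Ioi, Set.mem_empty_iff_false,
        iff_false, not_and, not_lt]
      intro hx; linarith
    rw [h1, Measure.restrict_empty, lintegral_zero_measure]
  have hνuniv : ν univ = 1 := by
    have h1 : ν univ = ν (Iic 0) + ν (Ioi 0) := by
      rw [← measure_union (Set.Iic_disjoint_Ioi le_rfl) measurableSet_Ioi, Set.Iic_union_Ioi]
    rw [h1, hνIic0 0 le_rfl, hνIoi 0 le_rfl, hzero, mul_zero, neg_zero, Real.exp_zero,
      ENNReal.ofReal_one, zero_add]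
  haveI : IsProbabilityMeasure ν := ⟨hνuniv⟩
  refine MeasureTheory.Measure.ext_of_Iic μ ν fun r => ?_
  rcases le_or_gt 0 r with hr | hr
  · have h1 : (Iic r) = (Ioi r)ᶜ := by rw [Set.compl_Ioi]
    rw [h1, prob_compl_eq_one_sub measurableSet_Ioi, prob_compl_eq_one_sub measurableSet_Ioi,
      htail r hr, hνIoi r hr]
  · rw [hνIic0 r hr.le]
    have h2 : μ (Iic 0) = 0 := by
      have h1 : (Iic (0:ℝ)) = (Ioi (0:ℝ))ᶜ := by rw [Set.compl_Ioi]
      rw [h1, prob_compl_eq_one_sub measurableSet_Ioi, htail 0 le_rfl, hzero, mul_zero,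
        neg_zero, Real.exp_zero, ENNReal.ofReal_one, tsub_self]
    exact le_antisymm (le_of_le_of_eq (measure_mono (Set.Iic_subset_Iic.2 hr.le)) h2)
      (zero_le)

end Stmt1Aux

open Stmt1Aux

/-- The probability that the tier-`k` nearest-BS distance is smaller than that of every other
tier (i.e. the serving BS belongs to tier `k`) is given by the integral formula of
Lemma 3 (general path-loss exponents). -/
theorem stmt1 {Ω : Type*} [MeasureSpace Ω] [IsProbabilityMeasure (ℙ : Measure Ω)]
    (K : ℕ) (hK : 1 ≤ K)
    (lam P B eps m a : Fin K → ℝ)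
    (hlam : ∀ l, 0 < lam l) (hP : ∀ l, 0 < P l) (hB : ∀ l, 0 < B l)
    (heps : ∀ l, 2 < eps l) (hm : ∀ l, 0 < m l)
    (ha : ∀ l, a l = lam l * π * (P l * B l) ^ (2 / eps l) * m l)
    (R : Fin K → Ω → ℝ) (hmeas : ∀ l, Measurable (R l))
    (hindep : iIndepFun R ℙ)
    (hnonneg : ∀ l ω, 0 ≤ R l ω)
    (htail : ∀ l, ∀ r : ℝ, 0 ≤ r →
      ℙ {ω | r < R l ω} = ENNReal.ofReal (Real.exp (-(a l * r ^ (2 / eps l)))))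
    (k : Fin K) :
    ℙ {ω | ∀ l, l ≠ k → R k ω < R l ω}
      = ENNReal.ofReal (∫ t in Set.Ioi (0:ℝ),
          lam k * m k * (2 * π) * t *
            Real.exp (-(∑ l, lam l * m l * π *
              ((P l * B l) / (P k * B k)) ^ (2 / eps l) * t ^ (2 * eps k / eps l)))) := by
  classical
  obtain ⟨n, rfl⟩ : ∃ n, K = n + 1 := ⟨K - 1, (Nat.succ_pred_eq_of_pos hK).symm⟩
  have hepos : ∀ l, (0:ℝ) < eps l := fun l => lt_trans two_pos (heps l)
  have hppos : ∀ l, (0:ℝ) < 2 / eps l := fun l => div_pos two_pos (hepos l)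
  have hPB : ∀ l, (0:ℝ) < P l * B l := fun l => mul_pos (hP l) (hB l)
  have hapos : ∀ l, 0 < a l := by
    intro l; rw [ha l]
    have h1 := Real.rpow_pos_of_pos (hPB l) (2 / eps l)
    have h2 := hlam l; have h3 := hm l; have h4 := Real.pi_pos
    positivity
  set μ : Fin (n+1) → Measure ℝ := fun l => Measure.map (R l) ℙ with hμdef
  haveI : ∀ l, IsProbabilityMeasure (μ l) :=
    fun l => Measure.isProbabilityMeasure_map (hmeas l).aemeasurable
  have hμIoi : ∀ l (r : ℝ), 0 ≤ r →
      μ l (Ioi r) = ENNReal.ofReal (Real.exp (-(a l * r ^ (2 / eps l)))) := by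
    intro l r hr
    rw [hμdef]
    rw [Measure.map_apply (hmeas l) measurableSet_Ioi]
    exact htail l r hr
  -- Step 1 : reduce to a lintegral against the law of `R k`
  have step1 : ℙ {ω | ∀ l, l ≠ k → R k ω < R l ω}
      = ∫⁻ r, ∏ j, μ (k.succAbove j) (Ioi r) ∂(μ k) := by

    set T : Ω → (Fin (n+1) → ℝ) := fun ω l => R l ω with hT
    have hTmeas : Measurable T := measurable_pi_lambda _ hmeas
    haveI : ∀ l, SigmaFinite (μ l) := fun l => inferInstance
    have hmap : Measure.map T ℙ = Measure.pi μ := by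
      refine (Measure.pi_eq (μ := μ) fun s hs => ?_).symm
      rw [Measure.map_apply hTmeas (MeasurableSet.univ_pi hs)]
      have hpre : T ⁻¹' (Set.pi univ s) = ⋂ l ∈ Finset.univ, R l ⁻¹' s l := by
        ext ω
        simp [hT, Set.mem_pi]
      rw [hpre, hindep.measure_inter_preimage_eq_mul Finset.univ (fun i _ => hs i)]
      exact Finset.prod_congr rfl fun l _ => (Measure.map_apply (hmeas l) (hs l)).symm
    set S : Set (Fin (n+1) → ℝ) := {x | ∀ l, l ≠ k → x k < x l} with hS
    set e := MeasurableEquiv.piFinSuccAbove (fun _ : Fin (n+1) => ℝ) k with he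
    set T' : Set (ℝ × (Fin n → ℝ)) := {y | ∀ j, y.1 < y.2 j} with hT'
    have hT'meas : MeasurableSet T' := by
      have h1 : T' = ⋂ j, {y : ℝ × (Fin n → ℝ) | y.1 < y.2 j} := by ext y; simp [hT']
      rw [h1]
      exact MeasurableSet.iInter fun j =>
        measurableSet_lt measurable_fst ((measurable_pi_apply j).comp measurable_snd)
    have hpreT' : e ⁻¹' T' = S := by
      ext x
      simp only [hS, hT', Set.mem_preimage, Set.mem_setOf_eq, he,
        MeasurableEquiv.piFinSuccAbove_apply, Fin.removeNth, Fin.insertNthEquiv,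
        Equiv.coe_fn_symm_mk]
      constructor
      · intro h l hl
        obtain ⟨j, rfl⟩ := Fin.exists_succAbove_eq (x := l) (y := k) hl
        exact h j
      · intro h j
        exact h _ (Fin.succAbove_ne k j)
    have hSmeas : MeasurableSet S := by
      rw [← hpreT']; exact e.measurable hT'meas
    have hprod := measurePreserving_piFinSuccAbove μ k
    have h0 : {ω | ∀ l, l ≠ k → R k ω < R l ω} = T ⁻¹' S := rfl
    rw [h0, ← Measure.map_apply hTmeas hSmeas, hmap, ← hpreT',
      hprod.measure_preimage hT'meas.nullMeasurableSet,
      Measure.prod_apply hT'meas]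
    refine lintegral_congr fun r => ?_
    have h2 : (Prod.mk r ⁻¹' T') = Set.pi univ (fun _ : Fin n => Ioi r) := by
      ext y; simp [hT', Set.mem_pi]
    rw [h2, Measure.pi_pi]
  set W : ℝ → ℝ := fun r => dens (a k) (2 / eps k) r *
      Real.exp (-(∑ j, a (k.succAbove j) * r ^ (2 / eps (k.succAbove j)))) with hW
  have hμk : μ k = (volume.restrict (Ioi 0)).withDensity
      (fun x => ENNReal.ofReal (dens (a k) (2 / eps k) x)) :=
    measure_eq_withDensity (hapos k) (hppos k) (μ k) (hμIoi k)
  have hGmeas : Measurable fun r : ℝ => ∏ j, μ (k.succAbove j) (Ioi r) :=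
    Finset.measurable_prod _ fun j _ =>
      Antitone.measurable (fun r s hrs => measure_mono (Ioi_subset_Ioi hrs))
  have step2 : ∫⁻ r, ∏ j, μ (k.succAbove j) (Ioi r) ∂(μ k)
      = ∫⁻ r in Ioi 0, ENNReal.ofReal (W r) := by
    rw [hμk, lintegral_withDensity_eq_lintegral_mul _
      ((measurable_dens _ _).ennreal_ofReal) hGmeas]
    refine setLIntegral_congr_fun measurableSet_Ioi (
      fun r hr => ?_)
    have hr0 : (0:ℝ) ≤ r := le_of_lt hr
    simp only [Pi.mul_apply]
    rw [Finset.prod_congr rfl (fun j _ => hμIoi (k.succAbove j) r hr0),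
      ← ENNReal.ofReal_prod_of_nonneg (fun j _ => (Real.exp_pos _).le),
      ← ENNReal.ofReal_mul (dens_nonneg (hapos k).le (hppos k).le hr0)]
    congr 1
    rw [hW]
    congr 1
    rw [← Real.exp_sum]
    congr 1
    rw [← Finset.sum_neg_distrib]
  have hWnn : ∀ r ∈ Ioi (0:ℝ), 0 ≤ W r := fun r hr =>
    mul_nonneg (dens_nonneg (hapos k).le (hppos k).le (le_of_lt hr)) (Real.exp_pos _).le
  have hWmeas : Measurable W := by
    rw [hW]; unfold dens; fun_prop
  have hWint : IntegrableOn W (Ioi 0) := by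
    refine Integrable.mono (integrableOn_dens (hapos k) (hppos k) le_rfl)
      hWmeas.aestronglyMeasurable ?_
    refine (ae_restrict_iff' measurableSet_Ioi).2 (Filter.Eventually.of_forall fun r hr => ?_)
    have hr0 : (0:ℝ) ≤ r := le_of_lt hr
    have hd := dens_nonneg (hapos k).le (hppos k).le hr0
    have hsum : 0 ≤ ∑ j, a (k.succAbove j) * r ^ (2 / eps (k.succAbove j)) :=
      Finset.sum_nonneg fun j _ => mul_nonneg (hapos _).le (Real.rpow_nonneg hr0 _)
    rw [Real.norm_eq_abs, Real.norm_eq_abs, abs_of_nonneg hd, abs_of_nonneg (hWnn r hr)]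
    rw [hW]
    exact mul_le_of_le_one_right hd (Real.exp_le_one_iff.2 (neg_nonpos.2 hsum))
  have step3 : ∫⁻ r in Ioi 0, ENNReal.ofReal (W r) = ENNReal.ofReal (∫ r in Ioi 0, W r) :=
    (ofReal_integral_eq_lintegral_ofReal hWint
      ((ae_restrict_iff' measurableSet_Ioi).2 (Filter.Eventually.of_forall hWnn))).symm
  have hq0 : eps k ≠ 0 := (hepos k).ne'
  have hbpos : (0:ℝ) < (P k * B k)⁻¹ := inv_pos.2 (hPB k)
  set Φ : ℝ → ℝ := fun u => lam k * m k * (2 * π) / eps k *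
      ((P k * B k)⁻¹) ^ (-((2 - eps k) / eps k)) * u ^ ((2 - eps k) / eps k) *
      Real.exp (-(∑ l, a l * u ^ (2 / eps l))) with hΦ
  have claim1 : ∀ u ∈ Ioi (0:ℝ), (P k * B k) * Φ u = W u := by
    intro u hu
    have hu0 : (0:ℝ) ≤ u := le_of_lt hu
    have hsplit : (∑ l, a l * u ^ (2 / eps l))
        = a k * u ^ (2 / eps k) + ∑ j, a (k.succAbove j) * u ^ (2 / eps (k.succAbove j)) :=
      Fin.sum_univ_succAbove (fun l => a l * u ^ (2 / eps l)) k
    have hbb : ((P k * B k)⁻¹) ^ (-((2 - eps k) / eps k))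
        = (P k * B k) ^ ((2 - eps k) / eps k) := by
      rw [Real.inv_rpow (hPB k).le, ← Real.rpow_neg (hPB k).le, neg_neg]
    have hs : (2 - eps k) / eps k = 2 / eps k - 1 := by field_simp
    have hPBsum : P k * B k * (P k * B k) ^ (2 / eps k - 1)
        = (P k * B k) ^ (2 / eps k) := by
      nth_rewrite 1 [← Real.rpow_one (P k * B k)]
      rw [← Real.rpow_add (hPB k)]
      congr 1
      ring
    simp only [hΦ, hW, dens]
    rw [hbb, hsplit, neg_add, Real.exp_add, hs, ha k]
    linear_combination (lam k * m k * (2 * π) / eps k * u ^ (2 / eps k - 1) *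
      (Real.exp (-(lam k * π * (P k * B k) ^ (2 / eps k) * m k * u ^ (2 / eps k))) *
        Real.exp (-(∑ j, a (k.succAbove j) * u ^ (2 / eps (k.succAbove j)))))) * hPBsum
  have claim2 : ∀ t ∈ Ioi (0:ℝ),
      lam k * m k * (2 * π) * t * Real.exp (-(∑ l, lam l * m l * π *
        ((P l * B l) / (P k * B k)) ^ (2 / eps l) * t ^ (2 * eps k / eps l)))
      = eps k * t ^ (eps k - 1) * Φ ((P k * B k)⁻¹ * t ^ eps k) := by
    intro t ht
    have ht0 : (0:ℝ) ≤ t := le_of_lt ht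
    have hb0 : (0:ℝ) ≤ (P k * B k)⁻¹ := hbpos.le
    have hsum2 : ∀ l : Fin (n+1), a l * ((P k * B k)⁻¹ * t ^ eps k) ^ (2 / eps l)
        = lam l * m l * π * ((P l * B l) / (P k * B k)) ^ (2 / eps l)
          * t ^ (2 * eps k / eps l) := by
      intro l
      rw [Real.mul_rpow hb0 (Real.rpow_nonneg ht0 _), Real.inv_rpow (hPB k).le,
        ← Real.rpow_mul ht0]
      have he : eps k * (2 / eps l) = 2 * eps k / eps l := by ring
      rw [he, ha l, Real.div_rpow (hPB l).le (hPB k).le, div_eq_mul_inv]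
      ring
    simp only [hΦ]
    rw [Real.mul_rpow hb0 (Real.rpow_nonneg ht0 _), ← Real.rpow_mul ht0]
    have hexp2 : eps k * ((2 - eps k) / eps k) = 2 - eps k := by field_simp
    rw [hexp2]
    rw [show (∑ l, a l * ((P k * B k)⁻¹ * t ^ eps k) ^ (2 / eps l))
        = ∑ l, lam l * m l * π * ((P l * B l) / (P k * B k)) ^ (2 / eps l)
            * t ^ (2 * eps k / eps l) from Finset.sum_congr rfl fun l _ => hsum2 l]
    have h3 : ((P k * B k)⁻¹) ^ (-((2 - eps k) / eps k))
        * ((P k * B k)⁻¹) ^ ((2 - eps k) / eps k) = 1 := by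
      rw [← Real.rpow_add hbpos, neg_add_cancel, Real.rpow_zero]
    have h4 : t ^ (eps k - 1) * t ^ (2 - eps k) = t := by
      rw [← Real.rpow_add ht, show eps k - 1 + (2 - eps k) = (1:ℝ) from by ring,
        Real.rpow_one]
    have h5 : eps k * (eps k)⁻¹ = 1 := mul_inv_cancel₀ hq0
    linear_combination
      (-(lam k * m k * (2 * π) * t *
          Real.exp (-(∑ l, lam l * m l * π * ((P l * B l) / (P k * B k)) ^ (2 / eps l)
            * t ^ (2 * eps k / eps l))))) * h3
      + (-(lam k * m k * (2 * π) *
          Real.exp (-(∑ l, lam l * m l * π * ((P l * B l) / (P k * B k)) ^ (2 / eps l)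
            * t ^ (2 * eps k / eps l))) * eps k * (eps k)⁻¹ *
          ((P k * B k)⁻¹) ^ (-((2 - eps k) / eps k)) *
          ((P k * B k)⁻¹) ^ ((2 - eps k) / eps k))) * h4
      + (-(lam k * m k * (2 * π) * t *
          Real.exp (-(∑ l, lam l * m l * π * ((P l * B l) / (P k * B k)) ^ (2 / eps l)
            * t ^ (2 * eps k / eps l))) *
          ((P k * B k)⁻¹) ^ (-((2 - eps k) / eps k)) *
          ((P k * B k)⁻¹) ^ ((2 - eps k) / eps k))) * h5
  have step4 : (∫ t in Ioi (0:ℝ),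
        lam k * m k * (2 * π) * t * Real.exp (-(∑ l, lam l * m l * π *
          ((P l * B l) / (P k * B k)) ^ (2 / eps l) * t ^ (2 * eps k / eps l))))
      = ∫ r in Ioi (0:ℝ), W r := by
    have hcov := integral_comp_rpow_Ioi_of_pos
      (g := fun s : ℝ => Φ ((P k * B k)⁻¹ * s)) (hepos k)
    have hmul := integral_comp_mul_left_Ioi Φ 0 hbpos
    simp only [smul_eq_mul, mul_zero, inv_inv] at hcov hmul
    rw [setIntegral_congr_fun measurableSet_Ioi claim2, hcov, hmul, ← integral_const_mul]
    exact setIntegral_congr_fun measurableSet_Ioi claim1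
  rw [step1, step2, step3, ← step4]
end

section
/- Let K ≥ 1, let ε > 2, and for each l ∈ {1,…,K} let λ_l > 0, P_l > 0, B_l > 0 and m_l > 0 be given, and set a_l = λ_l·π·(P_l B_l)^{2/ε}·m_l. Let R₁,…,R_K be independent nonnegative random variables with P(R_l > r) = exp(−a_l·r^{2/ε}) for all r ≥ 0 and all l. Then for every k ∈ {1,…,K}, P(R_k < R_l for all l ≠ k) = (λ_k·m_k·(P_k B_k)^{2/ε}) / (Σ_{m=1}^K λ_m·m_m·(P_m B_m)^{2/ε}). -/
open MeasureTheory ProbabilityTheory Real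
open scoped ENNReal

section Aux
open Set Filter

lemma tail_Ici {μ : Measure ℝ} [IsProbabilityMeasure μ] {a p : ℝ} (hp : 0 < p)
    (h : ∀ r : ℝ, 0 ≤ r → μ (Set.Ioi r) = ENNReal.ofReal (Real.exp (-(a * r ^ p)))) :
    ∀ s : ℝ, 0 ≤ s → μ (Set.Ici s) = ENNReal.ofReal (Real.exp (-(a * s ^ p))) := by
  intro s hs
  rcases hs.eq_or_lt with rfl | hs
  · have h0 : μ (Set.Ioi (0:ℝ)) = 1 := by
      rw [h 0 le_rfl, Real.zero_rpow hp.ne', mul_zero, neg_zero, Real.exp_zero,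
        ENNReal.ofReal_one]
    have h1 : (1:ℝ≥0∞) ≤ μ (Set.Ici (0:ℝ)) := h0 ▸ measure_mono Set.Ioi_subset_Ici_self
    rw [le_antisymm prob_le_one h1, Real.zero_rpow hp.ne', mul_zero, neg_zero, Real.exp_zero,
      ENNReal.ofReal_one]
  · set t : ℕ → ℝ := fun n => max (s - 1 / (n + 1)) 0 with ht
    have htnn : ∀ n, 0 ≤ t n := fun n => le_max_right _ _
    have hkey : Set.Ici s = ⋂ n, Set.Ioi (t n) := by
      ext x
      simp only [Set.mem_Ici, Set.mem_iInter, Set.mem_Ioi]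
      constructor
      · intro hx n
        have h1 : t n < s := max_lt (by
          have : (0:ℝ) < 1 / (n + 1) := by positivity
          linarith) hs
        exact lt_of_lt_of_le h1 hx
      · intro hx
        have hlim : Tendsto (fun n : ℕ => s - 1 / (n + 1)) atTop (nhds s) := by
          have := tendsto_one_div_add_atTop_nhds_zero_nat (𝕜 := ℝ)
          simpa using tendsto_const_nhds.sub this
        refine le_of_tendsto' hlim fun n => ?_
        exact (lt_of_le_of_lt (le_max_left _ _) (hx n)).le
    have hanti : Antitone fun n => Set.Ioi (t n) := by
      intro n m hnm
      apply Set.Ioi_subset_Ioi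
      apply max_le_max _ le_rfl
      have : (1:ℝ) / (m + 1) ≤ 1 / (n + 1) := by
        apply one_div_le_one_div_of_le (by positivity)
        have := (Nat.cast_le (α := ℝ)).2 hnm
        linarith
      linarith
    have hmeas := tendsto_measure_iInter_atTop
      (fun n => (measurableSet_Ioi (a := t n)).nullMeasurableSet) hanti
      ⟨0, measure_ne_top μ _⟩
    rw [← hkey] at hmeas
    have hvals : (μ ∘ fun n => Set.Ioi (t n)) =
        fun n => ENNReal.ofReal (Real.exp (-(a * t n ^ p))) := by
      funext n; exact h (t n) (htnn n)
    rw [hvals] at hmeas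
    have htt : Tendsto t atTop (nhds s) := by
      have hlim : Tendsto (fun n : ℕ => s - 1 / (n + 1)) atTop (nhds s) := by
        have := tendsto_one_div_add_atTop_nhds_zero_nat (𝕜 := ℝ)
        simpa using tendsto_const_nhds.sub this
      have := hlim.max (tendsto_const_nhds (x := (0:ℝ)))
      rwa [max_eq_left hs.le] at this
    have hcont : Tendsto (fun n => ENNReal.ofReal (Real.exp (-(a * t n ^ p)))) atTop
        (nhds (ENNReal.ofReal (Real.exp (-(a * s ^ p))))) := by
      apply (ENNReal.continuous_ofReal.tendsto _).comp
      apply (Real.continuous_exp.tendsto _).comp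
      apply Tendsto.neg
      apply Tendsto.const_mul
      exact ((Real.continuousAt_rpow_const s p (Or.inr hp.le)).tendsto).comp htt
    exact tendsto_nhds_unique hmeas hcont

lemma key_lintegral {μ : Measure ℝ} [IsProbabilityMeasure μ] {a p c : ℝ}
    (ha : 0 < a) (hp : 0 < p) (hc : 0 ≤ c)
    (h : ∀ r : ℝ, 0 ≤ r → μ (Set.Ioi r) = ENNReal.ofReal (Real.exp (-(a * r ^ p)))) :
    ∫⁻ r, ENNReal.ofReal (Real.exp (-(c * max r 0 ^ p))) ∂μ = ENNReal.ofReal (a / (a + c)) := by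
  rcases hc.eq_or_lt with rfl | hc
  · simp only [zero_mul, neg_zero, Real.exp_zero, ENNReal.ofReal_one, lintegral_one,
      measure_univ, add_zero, div_self ha.ne', ENNReal.ofReal_one]
  set f : ℝ → ℝ := fun r => Real.exp (-(c * max r 0 ^ p)) with hf
  have hbase : Continuous fun r : ℝ => max r 0 ^ p := by
    rw [continuous_iff_continuousAt]
    intro x
    exact (Real.continuousAt_rpow_const _ _ (Or.inr hp.le)).comp
      ((continuous_id.max continuous_const).continuousAt)
  have f_cont : Continuous f := Real.continuous_exp.comp (continuous_const.mul hbase).neg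
  rw [lintegral_eq_lintegral_meas_lt μ (Filter.Eventually.of_forall fun r => (Real.exp_pos _).le)
    f_cont.aemeasurable]
  set q : ℝ := a / c with hq
  have hq0 : 0 < q := div_pos ha hc
  have hIci := tail_Ici hp h
  have hset1 : ∀ t ∈ Set.Ioo (0:ℝ) 1, μ {r | t < f r} = ENNReal.ofReal (1 - t ^ q) := by
    rintro t ⟨ht0, ht1⟩
    set s : ℝ := (-Real.log t / c) ^ (1 / p) with hsdef
    have hlogt : 0 < -Real.log t := neg_pos.2 (Real.log_neg ht0 ht1)
    have hs : 0 < s := Real.rpow_pos_of_pos (div_pos hlogt hc) _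
    have hsp : s ^ p = -Real.log t / c := by
      rw [hsdef, one_div, Real.rpow_inv_rpow (by positivity) hp.ne']
    have hseteq : {r | t < f r} = Set.Iio s := by
      ext r
      simp only [Set.mem_setOf_eq, Set.mem_Iio, hf]
      rw [← Real.log_lt_iff_lt_exp ht0]
      constructor
      · intro hlt
        have h1 : c * max r 0 ^ p < -Real.log t := by linarith
        have h2 : max r 0 ^ p < s ^ p := by
          rw [hsp]; rw [lt_div_iff₀ hc] at *; linarith [mul_comm (max r 0 ^ p) c]
        have h3 : max r 0 < s :=
          (Real.rpow_lt_rpow_iff (le_max_right _ _) hs.le hp).mp h2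
        exact lt_of_le_of_lt (le_max_left _ _) h3
      · intro hlt
        have h3 : max r 0 < s := max_lt hlt hs
        have h2 : max r 0 ^ p < s ^ p := Real.rpow_lt_rpow (le_max_right _ _) h3 hp
        rw [hsp, lt_div_iff₀ hc] at h2
        nlinarith [mul_comm (max r 0 ^ p) c]
    rw [hseteq]
    have hcompl : μ (Set.Iio s) = 1 - μ (Set.Ici s) := by
      rw [← Set.compl_Ici, measure_compl measurableSet_Ici (measure_ne_top μ _), measure_univ]
    rw [hcompl, hIci s hs.le]
    have hval : a * s ^ p = q * -Real.log t := by
      rw [hsp, hq]; field_simp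
    have htq : Real.exp (-(a * s ^ p)) = t ^ q := by
      rw [hval, Real.rpow_def_of_pos ht0]
      ring_nf
    rw [htq, ← ENNReal.ofReal_one, ← ENNReal.ofReal_sub _ (Real.rpow_nonneg ht0.le q)]
  have hset2 : ∀ t ∈ Set.Ici (1:ℝ), μ {r | t < f r} = 0 := by
    intro t ht
    convert measure_empty (μ := μ)
    rw [Set.eq_empty_iff_forall_notMem]
    intro r hr
    simp only [Set.mem_setOf_eq, hf] at hr
    have : f r ≤ 1 := Real.exp_le_one_iff.2 (neg_nonpos.2 (by positivity))
    exact absurd hr (not_lt.2 (le_trans this ht))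
  have hsplit : Set.Ioi (0:ℝ) = Set.Ioo 0 1 ∪ Set.Ici 1 := by
    ext x
    simp only [Set.mem_Ioi, Set.mem_union, Set.mem_Ioo, Set.mem_Ici]
    constructor
    · intro hx; rcases lt_or_ge x 1 with h | h
      · exact Or.inl ⟨hx, h⟩
      · exact Or.inr h
    · rintro (⟨h1, _⟩ | h1) ; exact h1; linarith
  rw [hsplit, lintegral_union measurableSet_Ici
    (Set.disjoint_left.2 fun x hx hx' => hx.2.not_ge hx')]
  rw [setLIntegral_congr_fun measurableSet_Ici
    (fun t ht => hset2 t ht), lintegral_zero, add_zero]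
  rw [setLIntegral_congr_fun measurableSet_Ioo
    (fun t ht => hset1 t ht)]
  -- now compute ∫⁻ t in Ioo 0 1, ofReal (1 - t ^ q)
  have hii : IntervalIntegrable (fun t : ℝ => t ^ q) volume 0 1 :=
    intervalIntegral.intervalIntegrable_rpow' (by linarith)
  have hint : IntegrableOn (fun t : ℝ => 1 - t ^ q) (Set.Ioo 0 1) volume := by
    have : IntervalIntegrable (fun t : ℝ => 1 - t ^ q) volume 0 1 :=
      intervalIntegrable_const.sub hii
    rw [intervalIntegrable_iff_integrableOn_Ioc_of_le zero_le_one] at this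
    exact this.mono_set Set.Ioo_subset_Ioc_self
  rw [← ofReal_integral_eq_lintegral_ofReal hint]
  · congr 1
    rw [← integral_Ioc_eq_integral_Ioo, ← intervalIntegral.integral_of_le zero_le_one]
    rw [intervalIntegral.integral_sub intervalIntegrable_const hii,
      intervalIntegral.integral_const, integral_rpow (Or.inl (by linarith))]
    rw [Real.one_rpow, Real.zero_rpow (by positivity)]
    rw [hq]
    field_simp
    simp only [sub_zero, smul_eq_mul]
    ring
  · rw [EventuallyLE, ae_restrict_iff' measurableSet_Ioo]
    refine Filter.Eventually.of_forall fun t ht => ?_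
    simp only [Pi.zero_apply, sub_nonneg]
    exact Real.rpow_le_one ht.1.le ht.2.le hq0.le

end Aux

/-- When all tiers share a common path-loss exponent `ε`, the probability that the serving BS
belongs to tier `k` has the closed form
`λ_k m_k (P_k B_k)^{2/ε} / Σ_m λ_m m_m (P_m B_m)^{2/ε}`. -/
theorem stmt2 {Ω : Type*} [MeasureSpace Ω] [IsProbabilityMeasure (ℙ : Measure Ω)]
    (K : ℕ) (hK : 1 ≤ K) (eps : ℝ) (heps : 2 < eps)
    (lam P B m a : Fin K → ℝ)
    (hlam : ∀ l, 0 < lam l) (hP : ∀ l, 0 < P l) (hB : ∀ l, 0 < B l)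
    (hm : ∀ l, 0 < m l)
    (ha : ∀ l, a l = lam l * π * (P l * B l) ^ (2 / eps) * m l)
    (R : Fin K → Ω → ℝ) (hmeas : ∀ l, Measurable (R l))
    (hindep : iIndepFun R ℙ)
    (hnonneg : ∀ l ω, 0 ≤ R l ω)
    (htail : ∀ l, ∀ r : ℝ, 0 ≤ r →
      ℙ {ω | r < R l ω} = ENNReal.ofReal (Real.exp (-(a l * r ^ (2 / eps)))))
    (k : Fin K) :
    ℙ {ω | ∀ l, l ≠ k → R k ω < R l ω}
      = ENNReal.ofReal ((lam k * m k * (P k * B k) ^ (2 / eps)) /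
          (∑ i, lam i * m i * (P i * B i) ^ (2 / eps))) := by
    classical
  set p : ℝ := 2 / eps with hpdef
  have heps0 : (0:ℝ) < eps := by linarith
  have hp : 0 < p := by positivity
  have hrpos : ∀ l, 0 < (P l * B l) ^ p :=
    fun l => Real.rpow_pos_of_pos (mul_pos (hP l) (hB l)) _
  have hapos : ∀ l, 0 < a l := by
    intro l; rw [ha l]
    exact mul_pos (mul_pos (mul_pos (hlam l) Real.pi_pos) (hrpos l)) (hm l)
  -- uniform tail formula
  have htail' : ∀ l (r : ℝ), ℙ {ω | r < R l ω}
      = ENNReal.ofReal (Real.exp (-(a l * max r 0 ^ p))) := by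
    intro l r
    rcases le_or_gt 0 r with hr | hr
    · rw [max_eq_left hr]; exact htail l r hr
    · rw [max_eq_right hr.le, Real.zero_rpow hp.ne', mul_zero, neg_zero, Real.exp_zero,
        ENNReal.ofReal_one]
      have : {ω | r < R l ω} = Set.univ :=
        Set.eq_univ_of_forall fun ω => lt_of_lt_of_le hr (hnonneg l ω)
      rw [this, measure_univ]
  -- distribution of R k
  set μ : Measure ℝ := Measure.map (R k) ℙ with hμdef
  haveI : IsProbabilityMeasure μ := Measure.isProbabilityMeasure_map (hmeas k).aemeasurable
  have hμtail : ∀ r : ℝ, 0 ≤ r → μ (Set.Ioi r) = ENNReal.ofReal (Real.exp (-(a k * r ^ p))) := by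
    intro r hr
    rw [hμdef, Measure.map_apply (hmeas k) measurableSet_Ioi]
    exact htail k r hr
  -- the tuple of the other coordinates
  set T : Finset (Fin K) := {k}ᶜ with hT
  set h : Ω → (T → ℝ) := fun ω i => R i ω with hh
  have hhm : Measurable h := measurable_pi_lambda _ fun i => hmeas i
  haveI : IsProbabilityMeasure (Measure.map h ℙ) := Measure.isProbabilityMeasure_map hhm.aemeasurable
  -- independence of R k and h
  have hIndep : IndepFun (R k) h ℙ := by
    have h1 := hindep.indepFun_finset {k} T (by simp [hT]) hmeas
    have h2 := h1.comp (φ := fun x : (({k} : Finset (Fin K)) → ℝ) =>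
      x ⟨k, Finset.mem_singleton_self k⟩) (ψ := id) (_mγ := inferInstance) (_mγ' := inferInstance) (measurable_pi_apply _) measurable_id
    exact h2
  -- rewrite the event
  set S : Set (ℝ × (T → ℝ)) := {x | ∀ i : T, x.1 < x.2 i} with hS
  have hSmeas : MeasurableSet S := by
    have : S = ⋂ i : T, {x : ℝ × (T → ℝ) | x.1 < x.2 i} := by
      ext x; simp [hS]
    rw [this]
    exact MeasurableSet.iInter fun i =>
      measurableSet_lt measurable_fst ((measurable_pi_apply i).comp measurable_snd)
  have hevent : {ω | ∀ l, l ≠ k → R k ω < R l ω} = (fun ω => (R k ω, h ω)) ⁻¹' S := by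
    ext ω
    simp only [Set.mem_setOf_eq, Set.mem_preimage, hS, hh]
    constructor
    · rintro H ⟨i, hi⟩
      exact H i (by simpa [hT, Finset.mem_compl, Finset.mem_singleton] using hi)
    · intro H l hl
      exact H ⟨l, by simp [hT, Finset.mem_compl, Finset.mem_singleton, hl]⟩
  rw [hevent, ← Measure.map_apply ((hmeas k).prodMk hhm) hSmeas,
    (indepFun_iff_map_prod_eq_prod_map_map (hmeas k).aemeasurable hhm.aemeasurable).1 hIndep,
    Measure.prod_apply hSmeas]
  -- compute the inner measure
  have hinner : ∀ r : ℝ, (Measure.map h ℙ) (Prod.mk r ⁻¹' S)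
      = ENNReal.ofReal (Real.exp (-((∑ l ∈ T, a l) * max r 0 ^ p))) := by
    intro r
    have hpre : Prod.mk r ⁻¹' S = {z : T → ℝ | ∀ i : T, r < z i} := rfl
    rw [hpre, Measure.map_apply hhm (by
      have : {z : T → ℝ | ∀ i : T, r < z i} = ⋂ i : T, {z : T → ℝ | r < z i} := by
        ext z; simp
      rw [this]
      exact MeasurableSet.iInter fun i => measurableSet_lt measurable_const
        (measurable_pi_apply i))]
    have hpre2 : h ⁻¹' {z : T → ℝ | ∀ i : T, r < z i} = ⋂ l ∈ T, R l ⁻¹' Set.Ioi r := by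
      ext ω
      simp only [Set.mem_preimage, Set.mem_setOf_eq, Set.mem_iInter, Set.mem_Ioi, hh]
      exact ⟨fun H l hl => H ⟨l, hl⟩, fun H i => H i i.2⟩
    rw [hpre2, hindep.meas_biInter (fun i _ => ⟨Set.Ioi r, measurableSet_Ioi, rfl⟩)]
    have : ∀ l ∈ T, ℙ (R l ⁻¹' Set.Ioi r) = ENNReal.ofReal (Real.exp (-(a l * max r 0 ^ p))) := by
      intro l _
      have : R l ⁻¹' Set.Ioi r = {ω | r < R l ω} := rfl
      rw [this, htail']
    rw [Finset.prod_congr rfl this, ← ENNReal.ofReal_prod_of_nonneg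
      (fun i _ => (Real.exp_pos _).le), ← Real.exp_sum]
    congr 2
    simp [Finset.sum_mul]
  rw [lintegral_congr fun r => hinner _]
  -- apply the key integral lemma
  set c : ℝ := ∑ l ∈ T, a l with hc
  have hc0 : 0 ≤ c := Finset.sum_nonneg fun l _ => (hapos l).le
  rw [key_lintegral (hapos k) hp hc0 hμtail]
  -- final arithmetic
  have hsum : a k + c = ∑ l, a l := by
    rw [hc, hT, ← Finset.sum_singleton (f := a) k]
    exact Finset.sum_add_sum_compl {k} a
  rw [hsum]
  congr 1
  have hal : ∀ l, a l = π * (lam l * m l * (P l * B l) ^ p) := by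
    intro l; rw [ha l]; ring
  rw [Finset.sum_congr rfl fun l _ => hal l, hal k, ← Finset.mul_sum,
    mul_div_mul_left _ _ Real.pi_ne_zero]
end

section
/- Let K ≥ 1 and for each l ∈ {1,…,K} let λ_l > 0, P_l > 0, B_l > 0, ε_l > 2 and m_l > 0 be given, and set a_l = λ_l·π·(P_l B_l)^{2/ε_l}·m_l. Let R₁,…,R_K be independent nonnegative random variables such that P(R_l > r) = exp(−a_l·r^{2/ε_l}) for all r ≥ 0 and all l. Then for every k ∈ {1,…,K} and every r ≥ 0, the joint probability P(R_k > r and R_k < R_l for all l ≠ k) = ∫_r^∞ λ_k·(2π/ε_k)·(P_k B_k)^{2/ε_k}·m_k·t^{2/ε_k − 1}·exp(−Σ_{l=1}^K λ_l·π·(P_l B_l)^{2/ε_l}·m_l·t^{2/ε_l}) dt. -/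
open MeasureTheory ProbabilityTheory Real


open MeasureTheory ProbabilityTheory Real Filter Set Topology ENNReal NNReal

lemma aux_ftc {c q : ℝ} (hc : 0 < c) (hq : 0 < q) {s : ℝ} (hs : 0 < s) :
    IntegrableOn (fun t : ℝ => c * q * t ^ (q - 1) * Real.exp (-(c * t ^ q))) (Set.Ioi s) ∧
    ∫ t in Set.Ioi s, c * q * t ^ (q - 1) * Real.exp (-(c * t ^ q)) = Real.exp (-(c * s ^ q)) := by
  set g : ℝ → ℝ := fun t => -Real.exp (-(c * t ^ q)) with hg
  have hderiv : ∀ x ∈ Set.Ioi s, HasDerivAt g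
      (c * q * x ^ (q - 1) * Real.exp (-(c * x ^ q))) x := by
    intro x hx
    have h1 : HasDerivAt (fun t : ℝ => t ^ q) (q * x ^ (q - 1)) x :=
      Real.hasDerivAt_rpow_const (Or.inl (hs.trans hx).ne')
    have h2 : HasDerivAt (fun t : ℝ => -(c * t ^ q)) (-(c * (q * x ^ (q - 1)))) x :=
      ((h1.const_mul c).neg)
    have h3 : HasDerivAt g (-(Real.exp (-(c * x ^ q)) * -(c * (q * x ^ (q - 1))))) x :=
      (h2.exp).neg
    convert h3 using 1
    ring
  have hcont : ContinuousWithinAt g (Set.Ici s) s := by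
    have h1 : ContinuousAt (fun t : ℝ => t ^ q) s :=
      Real.continuousAt_rpow_const s q (Or.inl hs.ne')
    exact ((Real.continuous_exp.continuousAt.comp ((continuousAt_const.mul h1).neg)).neg).continuousWithinAt
  have htend : Tendsto g atTop (𝓝 0) := by
    have h2 : Tendsto (fun t : ℝ => c * t ^ q) atTop atTop :=
      (_root_.tendsto_rpow_atTop hq).const_mul_atTop hc
    have h3 : Tendsto (fun t : ℝ => -(c * t ^ q)) atTop atBot :=
      tendsto_neg_atTop_atBot.comp h2
    have h4 : Tendsto g atTop (𝓝 (-0)) := (Real.tendsto_exp_atBot.comp h3).neg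
    simpa using h4
  have hpos : ∀ x ∈ Set.Ioi s, 0 ≤ c * q * x ^ (q - 1) * Real.exp (-(c * x ^ q)) := by
    intro x hx
    have hx0 : (0:ℝ) ≤ x := (hs.trans hx).le
    positivity
  refine ⟨integrableOn_Ioi_deriv_of_nonneg hcont hderiv hpos htend, ?_⟩
  have := integral_Ioi_of_hasDerivAt_of_nonneg hcont hderiv hpos htend
  rw [this]; simp [hg]

lemma aux_law {c q : ℝ} (hc : 0 < c) (hq : 0 < q) (ν : Measure ℝ) [IsProbabilityMeasure ν]
    (hν : ∀ s : ℝ, 0 ≤ s → ν (Set.Ioi s) = ENNReal.ofReal (Real.exp (-(c * s ^ q)))) :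
    ν = MeasureTheory.volume.withDensity (fun t => ENNReal.ofReal ((Set.Ioi (0:ℝ)).indicator
      (fun t => c * q * t ^ (q - 1) * Real.exp (-(c * t ^ q))) t)) := by
  set φ : ℝ → ℝ := fun t => c * q * t ^ (q - 1) * Real.exp (-(c * t ^ q)) with hφ
  set μ' : Measure ℝ := MeasureTheory.volume.withDensity
      (fun t => ENNReal.ofReal ((Set.Ioi (0:ℝ)).indicator φ t)) with hμ'
  have hφm : Measurable φ :=
    ((measurable_const.mul (measurable_id.pow measurable_const)).mul
      ((measurable_const.mul (measurable_id.pow measurable_const)).neg.exp))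
  have hψm : Measurable (fun t => ENNReal.ofReal ((Set.Ioi (0:ℝ)).indicator φ t)) :=
    ENNReal.measurable_ofReal.comp (hφm.indicator measurableSet_Ioi)
  -- μ' on Ioi s for s > 0
  have hpos : ∀ s : ℝ, 0 < s → μ' (Set.Ioi s) = ENNReal.ofReal (Real.exp (-(c * s ^ q))) := by
    intro s hs
    rw [hμ', withDensity_apply _ measurableSet_Ioi]
    have h1 : ∫⁻ t in Set.Ioi s, ENNReal.ofReal ((Set.Ioi (0:ℝ)).indicator φ t)
        = ∫⁻ t in Set.Ioi s, ENNReal.ofReal (φ t) := by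
      refine setLIntegral_congr_fun measurableSet_Ioi (fun t ht => ?_)
      rw [Set.indicator_of_mem (Set.mem_Ioi.mpr (hs.trans ht))]
    rw [h1, ← MeasureTheory.ofReal_integral_eq_lintegral_ofReal (aux_ftc hc hq hs).1
      ((ae_restrict_iff' measurableSet_Ioi).2 (ae_of_all _ fun x hx => by
        have hx0 : (0:ℝ) ≤ x := (hs.trans hx).le
        positivity)), (aux_ftc hc hq hs).2]
  -- μ' (Ioi 0) = 1
  have hzero : μ' (Set.Ioi (0:ℝ)) = 1 := by
    have hmono : Monotone (fun n : ℕ => Set.Ioi (((n:ℝ)+1)⁻¹)) := by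
      intro n m hnm
      refine Set.Ioi_subset_Ioi ?_
      gcongr
    have hunion : (⋃ n : ℕ, Set.Ioi (((n:ℝ)+1)⁻¹)) = Set.Ioi (0:ℝ) := by
      ext x
      simp only [Set.mem_iUnion, Set.mem_Ioi]
      constructor
      · rintro ⟨n, hn⟩
        exact lt_trans (by positivity) hn
      · intro hx
        obtain ⟨n, hn⟩ := exists_nat_one_div_lt hx
        exact ⟨n, by simpa [one_div] using hn⟩
    have ht1 := tendsto_measure_iUnion_atTop (μ := μ') hmono
    rw [hunion] at ht1
    have ht2 : Filter.Tendsto (fun n : ℕ => μ' (Set.Ioi (((n:ℝ)+1)⁻¹))) Filter.atTop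
        (𝓝 (1 : ℝ≥0∞)) := by
      have hv : ∀ n : ℕ, μ' (Set.Ioi (((n:ℝ)+1)⁻¹))
          = ENNReal.ofReal (Real.exp (-(c * (((n:ℝ)+1)⁻¹) ^ q))) := fun n =>
        hpos _ (by positivity)
      simp only [hv]
      have h0 : Filter.Tendsto (fun n : ℕ => (((n:ℝ)+1)⁻¹)) Filter.atTop (𝓝 0) := by
        simpa only [one_div] using tendsto_one_div_add_atTop_nhds_zero_nat (𝕜 := ℝ)
      have h1 : Filter.Tendsto (fun n : ℕ => (((n:ℝ)+1)⁻¹) ^ q) Filter.atTop (𝓝 0) := by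
        have := (Real.continuousAt_rpow_const 0 q (Or.inr hq.le)).tendsto.comp h0
        simpa [Function.comp_def, Real.zero_rpow hq.ne'] using this
      have h2 : Filter.Tendsto (fun n : ℕ => Real.exp (-(c * (((n:ℝ)+1)⁻¹) ^ q))) Filter.atTop
          (𝓝 1) := by
        have h3 := (Real.continuous_exp.tendsto _).comp ((h1.const_mul c).neg)
        simpa [Function.comp_def] using h3
      have h4 := (ENNReal.continuous_ofReal.tendsto _).comp h2
      simpa [Function.comp_def] using h4
    exact tendsto_nhds_unique ht1 ht2
  -- μ' on Ioi s for s < 0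
  have hneg : ∀ s : ℝ, s < 0 → μ' (Set.Ioi s) = 1 := by
    intro s hs
    have hIoc : μ' (Set.Ioc s 0) = 0 := by
      rw [hμ', withDensity_apply _ measurableSet_Ioc]
      have : ∫⁻ t in Set.Ioc s 0, ENNReal.ofReal ((Set.Ioi (0:ℝ)).indicator φ t)
          = ∫⁻ t in Set.Ioc s 0, 0 := by
        refine setLIntegral_congr_fun measurableSet_Ioc (fun t ht => ?_)
        rw [Set.indicator_of_notMem (by simpa using ht.2)]
        simp
      rw [this, lintegral_zero]
    rw [← Set.Ioc_union_Ioi_eq_Ioi hs.le,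
      measure_union (Set.Ioc_disjoint_Ioi le_rfl) measurableSet_Ioi, hIoc, hzero, zero_add]
  -- all Ioi values agree
  have hν' : ∀ s : ℝ, ν (Set.Ioi s) = μ' (Set.Ioi s) := by
    intro s
    rcases lt_trichotomy s 0 with hs | hs | hs
    · rw [hneg s hs]
      refine le_antisymm prob_le_one ?_
      have h0 : ν (Set.Ioi (0:ℝ)) = 1 := by
        rw [hν 0 le_rfl]
        simp [Real.zero_rpow hq.ne']
      calc (1:ℝ≥0∞) = ν (Set.Ioi (0:ℝ)) := h0.symm
        _ ≤ ν (Set.Ioi s) := measure_mono (Set.Ioi_subset_Ioi hs.le)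
    · subst hs
      rw [hν 0 le_rfl, hzero]
      simp [Real.zero_rpow hq.ne']
    · rw [hν s hs.le, hpos s hs]
  -- conclude
  have hfin : ∀ s : ℝ, μ' (Set.Ioi s) ≠ ⊤ := fun s => by
    rw [← hν' s]; exact measure_ne_top ν _
  refine MeasureTheory.Measure.ext_of_Ioc ν μ' fun a b hab => ?_
  rw [← Set.Ioi_diff_Ioi,
    measure_diff (Set.Ioi_subset_Ioi hab.le) measurableSet_Ioi.nullMeasurableSet
      (measure_ne_top ν _),
    measure_diff (Set.Ioi_subset_Ioi hab.le) measurableSet_Ioi.nullMeasurableSet (hfin b),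
    hν' a, hν' b]


/-- Joint probability that the tier-`k` nearest-BS distance exceeds `r` and is smaller than
the nearest-BS distances of all other tiers (serving BS in tier `k` at distance `> r`). -/
theorem stmt3 {Ω : Type*} [MeasureSpace Ω] [IsProbabilityMeasure (ℙ : Measure Ω)]
    (K : ℕ) (hK : 1 ≤ K)
    (lam P B eps m a : Fin K → ℝ)
    (hlam : ∀ l, 0 < lam l) (hP : ∀ l, 0 < P l) (hB : ∀ l, 0 < B l)
    (heps : ∀ l, 2 < eps l) (hm : ∀ l, 0 < m l)
    (ha : ∀ l, a l = lam l * π * (P l * B l) ^ (2 / eps l) * m l)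
    (R : Fin K → Ω → ℝ) (hmeas : ∀ l, Measurable (R l))
    (hindep : iIndepFun R ℙ)
    (hnonneg : ∀ l ω, 0 ≤ R l ω)
    (htail : ∀ l, ∀ r : ℝ, 0 ≤ r →
      ℙ {ω | r < R l ω} = ENNReal.ofReal (Real.exp (-(a l * r ^ (2 / eps l)))))
    (k : Fin K) (r : ℝ) (hr : 0 ≤ r) :
    ℙ {ω | r < R k ω ∧ ∀ l, l ≠ k → R k ω < R l ω}
      = ENNReal.ofReal (∫ t in Set.Ioi r,
          lam k * (2 * π / eps k) * (P k * B k) ^ (2 / eps k) * m k * t ^ (2 / eps k - 1) *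
            Real.exp (-(∑ l, lam l * π * (P l * B l) ^ (2 / eps l) * m l * t ^ (2 / eps l)))) := by
  classical
  have hπ : (0:ℝ) < π := Real.pi_pos
  have heps0 : ∀ l, (0:ℝ) < eps l := fun l => lt_trans two_pos (heps l)
  have hq : ∀ l, (0:ℝ) < 2 / eps l := fun l => div_pos two_pos (heps0 l)
  have haPos : ∀ l, 0 < a l := fun l => by
    rw [ha l]
    have h1 := Real.rpow_pos_of_pos (mul_pos (hP l) (hB l)) (2 / eps l)
    have h2 := hlam l
    have h3 := hm l
    positivity
  set T : Finset (Fin K) := Finset.univ.erase k with hT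
  set Y : Ω → ({ x // x ∈ T } → ℝ) := fun ω i => R i ω with hYdef
  have hYmeas : Measurable Y := measurable_pi_lambda _ fun i => hmeas i
  have hdisj : Disjoint ({k} : Finset (Fin K)) T :=
    Finset.disjoint_singleton_left.mpr (Finset.notMem_erase k _)
  have h1 := hindep.indepFun_finset {k} T hdisj hmeas
  have hkmem : k ∈ ({k} : Finset (Fin K)) := Finset.mem_singleton_self k
  have hindep2 : IndepFun (R k) Y ℙ := by
    have h2 := h1.comp
      (measurable_pi_apply (⟨k, hkmem⟩ : { x // x ∈ ({k} : Finset (Fin K)) })) measurable_id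
    exact h2
  have hmapPair : (ℙ : Measure Ω).map (fun ω => (R k ω, Y ω)) = ((ℙ : Measure Ω).map (R k)).prod ((ℙ : Measure Ω).map Y) :=
    (indepFun_iff_map_prod_eq_prod_map_map (hmeas k).aemeasurable hYmeas.aemeasurable).mp hindep2
  set S' : Set (ℝ × ({ x // x ∈ T } → ℝ)) := {q | r < q.1 ∧ ∀ i, q.1 < q.2 i} with hS'
  have hS'm : MeasurableSet S' := by
    have heq : S' = {q : ℝ × ({ x // x ∈ T } → ℝ) | r < q.1}
        ∩ ⋂ i, {q : ℝ × ({ x // x ∈ T } → ℝ) | q.1 < q.2 i} := by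
      ext q; simp [hS', Set.mem_iInter]
    rw [heq]
    exact (measurableSet_lt measurable_const measurable_fst).inter
      (MeasurableSet.iInter fun i => measurableSet_lt measurable_fst
        ((measurable_pi_apply i).comp measurable_snd))
  have hE : {ω | r < R k ω ∧ ∀ l, l ≠ k → R k ω < R l ω} = (fun ω => (R k ω, Y ω)) ⁻¹' S' := by
    ext ω
    simp only [Set.mem_setOf_eq, Set.mem_preimage, hS', hYdef]
    constructor
    · rintro ⟨hh1, hh2⟩
      exact ⟨hh1, fun i => hh2 i (Finset.ne_of_mem_erase i.2)⟩
    · rintro ⟨hh1, hh2⟩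
      exact ⟨hh1, fun l hl => hh2 ⟨l, Finset.mem_erase.mpr ⟨hl, Finset.mem_univ l⟩⟩⟩
  haveI hYprob : IsProbabilityMeasure ((ℙ : Measure Ω).map Y) := Measure.isProbabilityMeasure_map hYmeas.aemeasurable
  haveI hXprob : IsProbabilityMeasure ((ℙ : Measure Ω).map (R k)) :=
    Measure.isProbabilityMeasure_map (hmeas k).aemeasurable
  have hinner : ∀ x : ℝ, ((ℙ : Measure Ω).map Y) (Prod.mk x ⁻¹' S')
      = (Set.Ioi r).indicator
        (fun x => ENNReal.ofReal (Real.exp (-(∑ l ∈ T, a l * x ^ (2 / eps l))))) x := by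
    intro x
    by_cases hx : r < x
    · rw [Set.indicator_of_mem (Set.mem_Ioi.mpr hx)]
      have hxpre : Prod.mk x ⁻¹' S' = {y : { x // x ∈ T } → ℝ | ∀ i, x < y i} := by
        ext y; simp [hS', hx]
      have hsetm : MeasurableSet {y : { x // x ∈ T } → ℝ | ∀ i, x < y i} := by
        have hieq : {y : { x // x ∈ T } → ℝ | ∀ i, x < y i}
            = ⋂ i, {y : { x // x ∈ T } → ℝ | x < y i} := by
          ext y; simp [Set.mem_iInter]
        rw [hieq]
        exact MeasurableSet.iInter fun i =>
          measurableSet_lt measurable_const (measurable_pi_apply i)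
      rw [hxpre, Measure.map_apply hYmeas hsetm]
      have hYpre : Y ⁻¹' {y : { x // x ∈ T } → ℝ | ∀ i, x < y i}
          = ⋂ l ∈ T, {ω | x < R l ω} := by
        ext ω
        simp only [Set.mem_preimage, Set.mem_setOf_eq, Set.mem_iInter, hYdef]
        exact ⟨fun h l hl => h ⟨l, hl⟩, fun h i => h i i.2⟩
      rw [hYpre, hindep.meas_biInter (S := T) (s := fun l => {ω | x < R l ω})
        (fun l _ => ⟨Set.Ioi x, measurableSet_Ioi, rfl⟩)]
      have hx0 : (0:ℝ) ≤ x := le_trans hr hx.le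
      calc ∏ l ∈ T, ℙ {ω | x < R l ω}
          = ∏ l ∈ T, ENNReal.ofReal (Real.exp (-(a l * x ^ (2 / eps l)))) :=
            Finset.prod_congr rfl fun l _ => htail l x hx0
        _ = ENNReal.ofReal (∏ l ∈ T, Real.exp (-(a l * x ^ (2 / eps l)))) :=
            (ENNReal.ofReal_prod_of_nonneg fun l _ => (Real.exp_pos _).le).symm
        _ = ENNReal.ofReal (Real.exp (-(∑ l ∈ T, a l * x ^ (2 / eps l)))) := by
            rw [← Real.exp_sum, Finset.sum_neg_distrib]
    · rw [Set.indicator_of_notMem (by simpa using hx)]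
      have hemp : Prod.mk x ⁻¹' S' = (∅ : Set ({ x // x ∈ T } → ℝ)) := by
        ext y; simp [hS', hx]
      rw [hemp, measure_empty]
  have hlaw : (ℙ : Measure Ω).map (R k) = MeasureTheory.volume.withDensity
      (fun t => ENNReal.ofReal ((Set.Ioi (0:ℝ)).indicator
        (fun t => a k * (2 / eps k) * t ^ (2 / eps k - 1)
          * Real.exp (-(a k * t ^ (2 / eps k)))) t)) := by
    refine aux_law (haPos k) (hq k) _ fun s hs => ?_
    rw [Measure.map_apply (hmeas k) measurableSet_Ioi]
    exact htail k s hs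
  have hψm : Measurable (fun t : ℝ => ENNReal.ofReal ((Set.Ioi (0:ℝ)).indicator
      (fun t => a k * (2 / eps k) * t ^ (2 / eps k - 1)
        * Real.exp (-(a k * t ^ (2 / eps k)))) t)) :=
    ENNReal.measurable_ofReal.comp
      (((((measurable_const.mul (measurable_id.pow measurable_const)).mul
        ((measurable_const.mul (measurable_id.pow measurable_const)).neg.exp))).indicator
          measurableSet_Ioi))
  have hGm : Measurable (fun x : ℝ =>
      ENNReal.ofReal (Real.exp (-(∑ l ∈ T, a l * x ^ (2 / eps l))))) :=
    ENNReal.measurable_ofReal.comp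
      ((Finset.measurable_sum _ fun l _ =>
        (measurable_id.pow measurable_const).const_mul _).neg.exp)
  have hFm : Measurable (fun t : ℝ =>
      lam k * (2 * π / eps k) * (P k * B k) ^ (2 / eps k) * m k * t ^ (2 / eps k - 1) *
        Real.exp (-(∑ l, lam l * π * (P l * B l) ^ (2 / eps l) * m l * t ^ (2 / eps l)))) :=
    ((measurable_id.pow measurable_const).const_mul _).mul
      ((Finset.measurable_sum _ fun l _ =>
        (measurable_id.pow measurable_const).const_mul _).neg.exp)
  have key : ℙ {ω | r < R k ω ∧ ∀ l, l ≠ k → R k ω < R l ω}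
      = ∫⁻ t in Set.Ioi r, ENNReal.ofReal
          (lam k * (2 * π / eps k) * (P k * B k) ^ (2 / eps k) * m k * t ^ (2 / eps k - 1) *
            Real.exp (-(∑ l, lam l * π * (P l * B l) ^ (2 / eps l) * m l * t ^ (2 / eps l)))) := by
    rw [hE, ← Measure.map_apply ((hmeas k).prodMk hYmeas) hS'm, hmapPair,
      Measure.prod_apply hS'm]
    calc ∫⁻ x, ((ℙ : Measure Ω).map Y) (Prod.mk x ⁻¹' S') ∂((ℙ : Measure Ω).map (R k))
        = ∫⁻ x, (Set.Ioi r).indicator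
            (fun x => ENNReal.ofReal (Real.exp (-(∑ l ∈ T, a l * x ^ (2 / eps l))))) x
            ∂((ℙ : Measure Ω).map (R k)) := lintegral_congr hinner
      _ = ∫⁻ x in Set.Ioi r,
            ENNReal.ofReal (Real.exp (-(∑ l ∈ T, a l * x ^ (2 / eps l)))) ∂((ℙ : Measure Ω).map (R k)) :=
          lintegral_indicator measurableSet_Ioi _
      _ = ∫⁻ x in Set.Ioi r, ((fun t => ENNReal.ofReal ((Set.Ioi (0:ℝ)).indicator
            (fun t => a k * (2 / eps k) * t ^ (2 / eps k - 1)
              * Real.exp (-(a k * t ^ (2 / eps k)))) t))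
            * (fun x => ENNReal.ofReal (Real.exp (-(∑ l ∈ T, a l * x ^ (2 / eps l)))))) x := by
          rw [hlaw, restrict_withDensity measurableSet_Ioi,
            lintegral_withDensity_eq_lintegral_mul _ hψm hGm]
      _ = ∫⁻ t in Set.Ioi r, ENNReal.ofReal
            (lam k * (2 * π / eps k) * (P k * B k) ^ (2 / eps k) * m k * t ^ (2 / eps k - 1) *
              Real.exp (-(∑ l, lam l * π * (P l * B l) ^ (2 / eps l) * m l * t ^ (2 / eps l))))
          := by
          refine setLIntegral_congr_fun measurableSet_Ioi (fun x hx => ?_)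
          have hx0 : (0:ℝ) < x := lt_of_le_of_lt hr hx
          simp only [Pi.mul_apply]
          rw [Set.indicator_of_mem (Set.mem_Ioi.mpr hx0)]
          rw [← ENNReal.ofReal_mul (mul_nonneg (mul_nonneg (mul_nonneg (haPos k).le
            (hq k).le) (Real.rpow_nonneg hx0.le _)) (Real.exp_pos _).le)]
          congr 1
          have hsum : a k * x ^ (2 / eps k) + ∑ l ∈ T, a l * x ^ (2 / eps l)
              = ∑ l, lam l * π * (P l * B l) ^ (2 / eps l) * m l * x ^ (2 / eps l) := by
            rw [add_comm, hT, Finset.sum_erase_add _ _ (Finset.mem_univ k)]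
            exact Finset.sum_congr rfl fun l _ => by rw [ha l]
          rw [mul_assoc, ← Real.exp_add, ← neg_add, hsum, ha k]
          ring
  rw [key]
  have hF0 : 0 ≤ᵐ[MeasureTheory.volume.restrict (Set.Ioi r)] (fun t : ℝ =>
      lam k * (2 * π / eps k) * (P k * B k) ^ (2 / eps k) * m k * t ^ (2 / eps k - 1) *
        Real.exp (-(∑ l, lam l * π * (P l * B l) ^ (2 / eps l) * m l * t ^ (2 / eps l)))) := by
    refine (ae_restrict_iff' measurableSet_Ioi).2 (ae_of_all _ fun x hx => ?_)
    have hx0 : (0:ℝ) ≤ x := le_trans hr (le_of_lt hx)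
    have h1 : (0:ℝ) ≤ 2 * π / eps k := div_nonneg (by positivity) (heps0 k).le
    have h2 := Real.rpow_nonneg (le_of_lt (mul_pos (hP k) (hB k))) (2 / eps k)
    have h3 := Real.rpow_nonneg hx0 (2 / eps k - 1)
    exact mul_nonneg (mul_nonneg (mul_nonneg (mul_nonneg (mul_nonneg
      (hlam k).le h1) h2) (hm k).le) h3) (Real.exp_pos _).le
  have hFint : IntegrableOn (fun t : ℝ =>
      lam k * (2 * π / eps k) * (P k * B k) ^ (2 / eps k) * m k * t ^ (2 / eps k - 1) *
        Real.exp (-(∑ l, lam l * π * (P l * B l) ^ (2 / eps l) * m l * t ^ (2 / eps l))))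
      (Set.Ioi r) := by
    refine ⟨hFm.aestronglyMeasurable, ?_⟩
    rw [hasFiniteIntegral_iff_ofReal hF0, ← key]
    exact measure_lt_top _ _
  exact (MeasureTheory.ofReal_integral_eq_lintegral_ofReal hFint hF0).symm
end

section
/- Let K ≥ 1 and for each l ∈ {1,…,K} let λ_l > 0, P_l > 0, B_l > 0, ε_l > 2 and m_l > 0 be given, and set a_l = λ_l·π·(P_l B_l)^{2/ε_l}·m_l. Let R₁,…,R_K be independent nonnegative random variables such that P(R_l > r) = exp(−a_l·r^{2/ε_l}) for all r ≥ 0 and all l, fix k ∈ {1,…,K}, write p_k = P(R_k < R_l for all l ≠ k), and note p_k > 0. Then the conditional tail function g(r) = P(R_k > r | R_k < R_l for all l ≠ k) is differentiable at every r > 0 with derivative g′(r) = −f(r), where f(r) = (1/p_k)·λ_k·(2π/ε_k)·(P_k B_k)^{2/ε_k}·m_k·r^{2/ε_k − 1}·exp(−Σ_{l=1}^K λ_l·π·(P_l B_l)^{2/ε_l}·m_l·r^{2/ε_l}); that is, f is the conditional probability density of the serving-BS distance given that the serving BS belongs to tier k. -/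
open MeasureTheory ProbabilityTheory Real

section Aux

open Set

lemma aux_contOn (A c : ℝ) :
    ContinuousOn (fun x : ℝ => A * c * x ^ (c - 1) * Real.exp (-(A * x ^ c))) (Ioi 0) := by
  intro x hx
  have h1 : ContinuousAt (fun x : ℝ => x ^ (c - 1)) x :=
    Real.continuousAt_rpow_const x _ (Or.inl (ne_of_gt hx))
  have h2 : ContinuousAt (fun x : ℝ => x ^ c) x :=
    Real.continuousAt_rpow_const x _ (Or.inl (ne_of_gt hx))
  exact (((continuousAt_const.mul h1).mul
    (Real.continuous_exp.continuousAt.comp ((continuousAt_const.mul h2).neg)))).continuousWithinAt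

lemma aux_intervalIntegrable (A c : ℝ) (hA : 0 ≤ A) (hc : 0 < c) (hc1 : c < 1)
    (u t : ℝ) (hu : 0 ≤ u) (hut : u ≤ t) :
    IntervalIntegrable (fun x : ℝ => A * c * x ^ (c - 1) * Real.exp (-(A * x ^ c)))
      volume u t := by
  have hg : IntervalIntegrable (fun x : ℝ => A * c * x ^ (c - 1)) volume u t :=
    (intervalIntegral.intervalIntegrable_rpow' (by linarith)).const_mul (A * c)
  have hsub : Set.uIoc u t ⊆ Ioi 0 := by
    rw [Set.uIoc_of_le hut]
    exact fun x hx => lt_of_le_of_lt hu hx.1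
  refine hg.mono_fun ?_ ?_
  · exact ((aux_contOn A c).aestronglyMeasurable measurableSet_Ioi).mono_measure
      (Measure.restrict_mono hsub le_rfl)
  · filter_upwards [ae_restrict_mem measurableSet_uIoc] with x hx
    have hx0 : 0 < x := hsub hx
    have h1 : 0 ≤ A * c * x ^ (c - 1) :=
      mul_nonneg (mul_nonneg hA hc.le) (Real.rpow_nonneg hx0.le _)
    have h2 : Real.exp (-(A * x ^ c)) ≤ 1 := by
      rw [Real.exp_le_one_iff]
      simp only [neg_nonpos]
      exact mul_nonneg hA (Real.rpow_nonneg hx0.le _)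
    rw [Real.norm_eq_abs, Real.norm_eq_abs, abs_of_nonneg h1,
      abs_of_nonneg (mul_nonneg h1 (Real.exp_nonneg _))]
    nlinarith [Real.exp_nonneg (-(A * x ^ c))]

lemma aux_ftc_s4 (A c u t : ℝ) (hA : 0 ≤ A) (hc : 0 < c) (hc1 : c < 1)
    (hu : 0 ≤ u) (hut : u ≤ t) :
    ∫ x in u..t, A * c * x ^ (c - 1) * Real.exp (-(A * x ^ c))
      = Real.exp (-(A * u ^ c)) - Real.exp (-(A * t ^ c)) := by
  have hcont : ContinuousOn (fun x : ℝ => -Real.exp (-(A * x ^ c))) (Icc u t) := by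
    intro x hx
    have h2 : ContinuousAt (fun x : ℝ => x ^ c) x := by
      rcases eq_or_ne x 0 with h | h
      · exact Real.continuousAt_rpow_const x _ (Or.inr hc.le)
      · exact Real.continuousAt_rpow_const x _ (Or.inl h)
    exact ((Real.continuous_exp.continuousAt.comp
      ((continuousAt_const.mul h2).neg)).neg).continuousWithinAt
  have hderiv : ∀ x ∈ Ioo u t, HasDerivAt (fun x : ℝ => -Real.exp (-(A * x ^ c)))
      (A * c * x ^ (c - 1) * Real.exp (-(A * x ^ c))) x := by
    intro x hx
    have hx0 : 0 < x := lt_of_le_of_lt hu hx.1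
    have h1 : HasDerivAt (fun x : ℝ => x ^ c) (c * x ^ (c - 1)) x :=
      Real.hasDerivAt_rpow_const (Or.inl hx0.ne')
    have h2 : HasDerivAt (fun x : ℝ => -(A * x ^ c)) (-(A * (c * x ^ (c - 1)))) x :=
      (h1.const_mul A).neg
    have h3 := (h2.exp).neg
    refine h3.congr_deriv ?_
    ring
  have := intervalIntegral.integral_eq_sub_of_hasDerivAt_of_le hut hcont hderiv
    (aux_intervalIntegrable A c hA hc hc1 u t hu hut)
  rw [this]
  ring

noncomputable def auxDens (A c : ℝ) : ℝ → ENNReal :=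
  (Set.Ioi (0:ℝ)).indicator
    (fun x => ENNReal.ofReal (A * c * (x ^ c / x) * Real.exp (-(A * x ^ c))))

lemma auxDens_measurable (A c : ℝ) (hc : 0 ≤ c) : Measurable (auxDens A c) := by
  refine Measurable.indicator ?_ measurableSet_Ioi
  refine ENNReal.measurable_ofReal.comp ?_
  have h1 : Measurable (fun x : ℝ => x ^ c) := (Real.continuous_rpow_const hc).measurable
  exact ((measurable_const.mul (h1.div measurable_id)).mul
    (Real.continuous_exp.measurable.comp (measurable_const.mul h1).neg))

lemma auxDens_eq (A c x : ℝ) (hx : 0 < x) :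
    auxDens A c x = ENNReal.ofReal (A * c * x ^ (c - 1) * Real.exp (-(A * x ^ c))) := by
  simp only [auxDens]
  rw [Set.indicator_of_mem (Set.mem_Ioi.mpr hx), Real.rpow_sub_one hx.ne']

lemma aux_nu_Iic (A c : ℝ) (hA : 0 ≤ A) (hc : 0 < c) (hc1 : c < 1) (t : ℝ) :
    volume.withDensity (auxDens A c) (Iic t)
      = ENNReal.ofReal (1 - Real.exp (-(A * (max t 0) ^ c))) := by
  rw [withDensity_apply _ measurableSet_Iic]
  have h1 : ∫⁻ x in Iic t, auxDens A c x = ∫⁻ x in Ioi 0 ∩ Iic t,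
      (fun x => ENNReal.ofReal (A * c * (x ^ c / x) * Real.exp (-(A * x ^ c)))) x := by
    rw [← Measure.restrict_restrict measurableSet_Ioi,
      ← lintegral_indicator measurableSet_Ioi]
    rfl
  rw [h1, Set.Ioi_inter_Iic]
  rcases le_or_gt t 0 with ht | ht
  · rw [Set.Ioc_eq_empty (by simpa using ht), max_eq_right ht]
    simp [Real.zero_rpow hc.ne']
  · rw [max_eq_left ht.le]
    have hintOn : IntegrableOn
        (fun x : ℝ => A * c * x ^ (c - 1) * Real.exp (-(A * x ^ c))) (Ioc 0 t) volume := by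
      rw [← intervalIntegrable_iff_integrableOn_Ioc_of_le ht.le]
      exact aux_intervalIntegrable A c hA hc hc1 0 t le_rfl ht.le
    have hEq : EqOn (fun x : ℝ => A * c * x ^ (c - 1) * Real.exp (-(A * x ^ c)))
        (fun x : ℝ => A * c * (x ^ c / x) * Real.exp (-(A * x ^ c))) (Ioc 0 t) := by
      intro x hx
      simp only
      rw [Real.rpow_sub_one (ne_of_gt hx.1)]
    have hintOn2 : IntegrableOn
        (fun x : ℝ => A * c * (x ^ c / x) * Real.exp (-(A * x ^ c))) (Ioc 0 t) volume :=
      hintOn.congr_fun hEq measurableSet_Ioc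
    rw [← ofReal_integral_eq_lintegral_ofReal hintOn2]
    · congr 1
      rw [← setIntegral_congr_fun measurableSet_Ioc hEq,
        ← intervalIntegral.integral_of_le ht.le,
        aux_ftc_s4 A c 0 t hA hc hc1 le_rfl ht.le]
      simp [Real.zero_rpow hc.ne']
    · filter_upwards [ae_restrict_mem measurableSet_Ioc] with x hx
      have hx0 : 0 < x := hx.1
      have : 0 ≤ x ^ c / x := div_nonneg (Real.rpow_nonneg hx0.le _) hx0.le
      positivity

lemma aux_measure_eq (A c : ℝ) (hA : 0 ≤ A) (hc : 0 < c) (hc1 : c < 1)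
    (μ : Measure ℝ) [IsProbabilityMeasure μ]
    (htail : ∀ t : ℝ, 0 ≤ t → μ (Set.Ioi t) = ENNReal.ofReal (Real.exp (-(A * t ^ c)))) :
    μ = volume.withDensity (auxDens A c) := by
  have hIic : ∀ t : ℝ, 0 ≤ t → μ (Iic t) = ENNReal.ofReal (1 - Real.exp (-(A * t ^ c))) := by
    intro t ht
    have : μ (Iic t) = μ univ - μ (Ioi t) := by
      rw [← Set.compl_Ioi]
      exact measure_compl measurableSet_Ioi (measure_ne_top μ _)
    rw [this, measure_univ, htail t ht, ← ENNReal.ofReal_one,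
      ← ENNReal.ofReal_sub _ (Real.exp_nonneg _)]
  refine Measure.ext_of_Iic μ _ (fun t => ?_)
  rw [aux_nu_Iic A c hA hc hc1 t]
  rcases le_or_gt t 0 with ht | ht
  · rw [max_eq_right ht]
    have h0 : μ (Iic 0) = 0 := by
      rw [hIic 0 le_rfl]
      simp [Real.zero_rpow hc.ne']
    have : μ (Iic t) = 0 := le_antisymm (h0 ▸ measure_mono (Iic_subset_Iic.mpr ht)) zero_le
    rw [this]
    simp [Real.zero_rpow hc.ne']
  · rw [max_eq_left ht.le, hIic t ht.le]

lemma aux_event_eq {Ω : Type*} [MeasureSpace Ω] [IsProbabilityMeasure (ℙ : Measure Ω)]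
    {K : ℕ} (a eps : Fin K → ℝ)
    (hc : ∀ l, 0 < 2 / eps l) (hc1 : ∀ l, 2 / eps l < 1) (hA : ∀ l, 0 < a l)
    (R : Fin K → Ω → ℝ) (hmeas : ∀ l, Measurable (R l))
    (hindep : iIndepFun R ℙ)
    (htail : ∀ l, ∀ r : ℝ, 0 ≤ r →
      ℙ {ω | r < R l ω} = ENNReal.ofReal (Real.exp (-(a l * r ^ (2 / eps l)))))
    (k : Fin K) (s : ℝ) (hs : 0 ≤ s) :
    ℙ {ω | s < R k ω ∧ ∀ l, l ≠ k → R k ω < R l ω}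
      = ∫⁻ x in Ioi s, ENNReal.ofReal
          (a k * (2 / eps k) * x ^ (2 / eps k - 1)
            * Real.exp (-(∑ l, a l * x ^ (2 / eps l)))) := by
  classical
  set S : Finset (Fin K) := Finset.univ.erase k with hS
  set Y : Ω → (S → ℝ) := fun ω l => R l ω with hY
  have hYmeas : Measurable Y := measurable_pi_lambda _ fun l => hmeas l
  have hμY : IsProbabilityMeasure (Measure.map Y (ℙ : Measure Ω)) :=
    Measure.isProbabilityMeasure_map hYmeas.aemeasurable
  have hμk : IsProbabilityMeasure (Measure.map (R k) (ℙ : Measure Ω)) :=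
    Measure.isProbabilityMeasure_map (hmeas k).aemeasurable
  have hIndep : IndepFun (R k) Y ℙ := by
    have hdisj : Disjoint ({k} : Finset (Fin K)) S := by
      simp [hS, Finset.disjoint_left]
    have h1 := hindep.indepFun_finset {k} S hdisj hmeas
    exact h1.comp (φ := fun g : ({k} : Finset (Fin K)) → ℝ =>
      g ⟨k, Finset.mem_singleton_self k⟩) (ψ := id) (measurable_pi_apply _) measurable_id
  set C : Set (ℝ × (S → ℝ)) := {p | s < p.1 ∧ ∀ l : S, p.1 < p.2 l} with hC
  have hCmeas : MeasurableSet C := by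
    have : C = {p : ℝ × (S → ℝ) | s < p.1} ∩ ⋂ l : S, {p : ℝ × (S → ℝ) | p.1 < p.2 l} := by
      ext p; simp [hC, Set.mem_iInter]
    rw [this]
    exact (measurableSet_lt measurable_const measurable_fst).inter
      (MeasurableSet.iInter fun l => measurableSet_lt measurable_fst
        ((measurable_pi_apply l).comp measurable_snd))
  have hpre : {ω | s < R k ω ∧ ∀ l, l ≠ k → R k ω < R l ω}
      = (fun ω => (R k ω, Y ω)) ⁻¹' C := by
    ext ω
    simp only [Set.mem_setOf_eq, Set.mem_preimage, hC, hY]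
    constructor
    · rintro ⟨h1, h2⟩
      exact ⟨h1, fun l => h2 l (Finset.ne_of_mem_erase l.2)⟩
    · rintro ⟨h1, h2⟩
      exact ⟨h1, fun l hl => h2 ⟨l, Finset.mem_erase.mpr ⟨hl, Finset.mem_univ l⟩⟩⟩
  have hZmeas : Measurable fun ω => (R k ω, Y ω) := (hmeas k).prodMk hYmeas
  rw [hpre, ← Measure.map_apply hZmeas hCmeas,
    (indepFun_iff_map_prod_eq_prod_map_map (hmeas k).aemeasurable hYmeas.aemeasurable).mp hIndep,
    Measure.prod_apply hCmeas]
  have hslice : ∀ x : ℝ, (Measure.map Y (ℙ : Measure Ω)) (Prod.mk x ⁻¹' C)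
      = (Ioi s).indicator
          (fun x => ∏ l ∈ S, ENNReal.ofReal (Real.exp (-(a l * x ^ (2 / eps l))))) x := by
    intro x
    by_cases hx : s < x
    · have hx0 : (0:ℝ) ≤ x := le_trans hs hx.le
      have hset : Prod.mk x ⁻¹' C = Set.pi Set.univ (fun _ : S => Ioi x) := by
        ext y
        simp [hC, hx, Set.mem_pi]
      rw [hset, Set.indicator_of_mem (Set.mem_Ioi.mpr hx),
        Measure.map_apply hYmeas (MeasurableSet.univ_pi fun _ => measurableSet_Ioi)]
      have hpre2 : Y ⁻¹' (Set.pi Set.univ fun _ : S => Ioi x) = ⋂ l ∈ S, R l ⁻¹' Ioi x := by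
        ext ω
        simp only [Set.mem_preimage, Set.mem_pi, Set.mem_univ, forall_true_left, hY,
          Set.mem_iInter, Set.mem_Ioi]
        constructor
        · intro h l hl; exact h ⟨l, hl⟩
        · intro h l; exact h l l.2
      rw [hpre2, hindep.measure_inter_preimage_eq_mul S (fun i _ => measurableSet_Ioi)]
      exact Finset.prod_congr rfl fun l hl => htail l x hx0
    · have hset : Prod.mk x ⁻¹' C = ∅ := by
        ext y; simp [hC, hx]
      rw [hset, Set.indicator_of_notMem (by simpa using hx)]
      simp
  rw [lintegral_congr hslice, lintegral_indicator measurableSet_Ioi]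
  have hGmeas : Measurable fun x : ℝ =>
      ∏ l ∈ S, ENNReal.ofReal (Real.exp (-(a l * x ^ (2 / eps l)))) := by
    refine Finset.measurable_prod _ fun l _ => ?_
    exact ENNReal.measurable_ofReal.comp
      (Real.continuous_exp.measurable.comp
        (measurable_const.mul (Real.continuous_rpow_const (hc l).le).measurable).neg)
  have hdens := aux_measure_eq (a k) (2 / eps k) (hA k).le (hc k) (hc1 k)
    (Measure.map (R k) (ℙ : Measure Ω))
    (fun t ht => by
      rw [Measure.map_apply (hmeas k) measurableSet_Ioi]
      exact htail k t ht)
  rw [hdens, setLIntegral_withDensity_eq_setLIntegral_mul volume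
    (auxDens_measurable _ _ (hc k).le) hGmeas measurableSet_Ioi]
  refine setLIntegral_congr_fun measurableSet_Ioi (fun x hx => ?_)
  have hx0 : 0 < x := lt_of_le_of_lt hs hx
  have hnn : 0 ≤ a k * (2 / eps k) * x ^ (2 / eps k - 1) * Real.exp (-(a k * x ^ (2 / eps k))) :=
    mul_nonneg (mul_nonneg (mul_nonneg (hA k).le (hc k).le) (Real.rpow_nonneg hx0.le _))
      (Real.exp_nonneg _)
  rw [Pi.mul_apply, auxDens_eq _ _ x hx0,
    ← ENNReal.ofReal_prod_of_nonneg (fun l _ => Real.exp_nonneg _),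
    ← ENNReal.ofReal_mul hnn]
  congr 1
  have h1 : ∏ l ∈ S, Real.exp (-(a l * x ^ (2 / eps l)))
      = Real.exp (∑ l ∈ S, -(a l * x ^ (2 / eps l))) := (Real.exp_sum _ _).symm
  have h3 : a k * x ^ (2 / eps k) + ∑ l ∈ S, a l * x ^ (2 / eps l)
      = ∑ l, a l * x ^ (2 / eps l) := by
    rw [hS]
    exact Finset.add_sum_erase Finset.univ (fun l => a l * x ^ (2 / eps l)) (Finset.mem_univ k)
  have h2 : ∑ l ∈ S, -(a l * x ^ (2 / eps l)) = -∑ l ∈ S, a l * x ^ (2 / eps l) := by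
    simp
  have h4 : -(a k * x ^ (2 / eps k)) + ∑ l ∈ S, -(a l * x ^ (2 / eps l))
      = -(∑ l, a l * x ^ (2 / eps l)) := by
    rw [h2]; linarith
  rw [h1, mul_assoc, ← Real.exp_add, h4]

end Aux

/-- The conditional tail function `g(r) = P(R_k > r | R_k < R_l for all l ≠ k)` is
differentiable at every `r > 0` with derivative `-f(r)`, where `f` is the conditional
probability density of the serving-BS distance given that the serving BS is in tier `k`;
moreover the conditioning event has positive probability. -/
theorem stmt4 {Ω : Type*} [MeasureSpace Ω] [IsProbabilityMeasure (ℙ : Measure Ω)]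
    (K : ℕ) (hK : 1 ≤ K)
    (lam P B eps m a : Fin K → ℝ)
    (hlam : ∀ l, 0 < lam l) (hP : ∀ l, 0 < P l) (hB : ∀ l, 0 < B l)
    (heps : ∀ l, 2 < eps l) (hm : ∀ l, 0 < m l)
    (ha : ∀ l, a l = lam l * π * (P l * B l) ^ (2 / eps l) * m l)
    (R : Fin K → Ω → ℝ) (hmeas : ∀ l, Measurable (R l))
    (hindep : iIndepFun R ℙ)
    (hnonneg : ∀ l ω, 0 ≤ R l ω)
    (htail : ∀ l, ∀ r : ℝ, 0 ≤ r →
      ℙ {ω | r < R l ω} = ENNReal.ofReal (Real.exp (-(a l * r ^ (2 / eps l)))))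
    (k : Fin K)
    (pk : ℝ) (hpk : pk = (ℙ {ω | ∀ l, l ≠ k → R k ω < R l ω}).toReal) :
    0 < pk ∧
    ∀ r : ℝ, 0 < r →
      HasDerivAt
        (fun s : ℝ => (ℙ {ω | s < R k ω ∧ ∀ l, l ≠ k → R k ω < R l ω}).toReal / pk)
        (-((1 / pk) * (lam k * (2 * π / eps k) * (P k * B k) ^ (2 / eps k) * m k *
            r ^ (2 / eps k - 1) *
            Real.exp (-(∑ l, lam l * π * (P l * B l) ^ (2 / eps l) * m l * r ^ (2 / eps l))))))
        r := by
  classical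
  have hepspos : ∀ l, 0 < eps l := fun l => lt_trans two_pos (heps l)
  have hc : ∀ l, 0 < 2 / eps l := fun l => div_pos two_pos (hepspos l)
  have hc1 : ∀ l, 2 / eps l < 1 := fun l => (div_lt_one (hepspos l)).mpr (heps l)
  have hA : ∀ l, 0 < a l := fun l => by
    rw [ha l]
    have h1 := Real.rpow_pos_of_pos (mul_pos (hP l) (hB l)) (2 / eps l)
    have h2 := hlam l
    have h3 := hm l
    have h4 := Real.pi_pos
    positivity
  set hfun : ℝ → ℝ := fun x => a k * (2 / eps k) * x ^ (2 / eps k - 1)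
      * Real.exp (-(∑ l, a l * x ^ (2 / eps l))) with hfun_def
  have key : ∀ s : ℝ, 0 ≤ s → ℙ {ω | s < R k ω ∧ ∀ l, l ≠ k → R k ω < R l ω}
      = ∫⁻ x in Set.Ioi s, ENNReal.ofReal (hfun x) :=
    fun s hs => aux_event_eq a eps hc hc1 hA R hmeas hindep htail k s hs
  have hnnIoi : ∀ x : ℝ, 0 < x → 0 ≤ hfun x := fun x hx =>
    mul_nonneg (mul_nonneg (mul_nonneg (hA k).le (hc k).le) (Real.rpow_nonneg hx.le _))
      (Real.exp_nonneg _)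
  -- the conditioning event equals the event with `0 < R k ω` added
  have hE0 : ℙ {ω | ∀ l, l ≠ k → R k ω < R l ω}
      = ℙ {ω | (0:ℝ) < R k ω ∧ ∀ l, l ≠ k → R k ω < R l ω} := by
    have hcompl : ℙ {ω | ¬ (0:ℝ) < R k ω} = 0 := by
      have h1 : ℙ {ω | (0:ℝ) < R k ω} = 1 := by
        rw [htail k 0 le_rfl]
        simp [Real.zero_rpow (ne_of_gt (hc k))]
      have h2 : {ω : Ω | ¬ (0:ℝ) < R k ω} = {ω : Ω | (0:ℝ) < R k ω}ᶜ := rfl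
      have h3 : MeasurableSet {ω : Ω | (0:ℝ) < R k ω} := (hmeas k) measurableSet_Ioi
      rw [h2, measure_compl h3 (measure_ne_top _ _), h1, measure_univ, tsub_self]
    refine le_antisymm ?_ (measure_mono fun ω h => h.2)
    calc ℙ {ω | ∀ l, l ≠ k → R k ω < R l ω}
        ≤ ℙ ({ω | (0:ℝ) < R k ω ∧ ∀ l, l ≠ k → R k ω < R l ω} ∪ {ω | ¬ (0:ℝ) < R k ω}) := by
          refine measure_mono fun ω h => ?_
          by_cases h0 : (0:ℝ) < R k ω
          · exact Or.inl ⟨h0, h⟩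
          · exact Or.inr h0
      _ ≤ ℙ {ω | (0:ℝ) < R k ω ∧ ∀ l, l ≠ k → R k ω < R l ω} + ℙ {ω | ¬ (0:ℝ) < R k ω} :=
          measure_union_le _ _
      _ = ℙ {ω | (0:ℝ) < R k ω ∧ ∀ l, l ≠ k → R k ω < R l ω} := by rw [hcompl, add_zero]
  -- positivity of pk
  have hδ : 0 < a k * (2 / eps k) * (2:ℝ) ^ (2 / eps k - 1)
      * Real.exp (-(∑ l, a l * (2:ℝ) ^ (2 / eps l))) := by
    have h1 := Real.rpow_pos_of_pos (two_pos (α := ℝ)) (2 / eps k - 1)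
    have h2 := hA k
    have h3 := hc k
    positivity
  have hlb : ∀ x ∈ Set.Ioc (1:ℝ) 2,
      a k * (2 / eps k) * (2:ℝ) ^ (2 / eps k - 1)
        * Real.exp (-(∑ l, a l * (2:ℝ) ^ (2 / eps l))) ≤ hfun x := by
    intro x hx
    have hx0 : (0:ℝ) < x := lt_trans one_pos hx.1
    have h1 : (2:ℝ) ^ (2 / eps k - 1) ≤ x ^ (2 / eps k - 1) :=
      Real.rpow_le_rpow_of_nonpos hx0 hx.2 (by linarith [hc1 k, hc k])
    have h2 : Real.exp (-(∑ l, a l * (2:ℝ) ^ (2 / eps l)))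
        ≤ Real.exp (-(∑ l, a l * x ^ (2 / eps l))) := by
      rw [Real.exp_le_exp, neg_le_neg_iff]
      refine Finset.sum_le_sum fun l _ => ?_
      exact mul_le_mul_of_nonneg_left (Real.rpow_le_rpow hx0.le hx.2 (hc l).le) (hA l).le
    calc a k * (2 / eps k) * (2:ℝ) ^ (2 / eps k - 1)
          * Real.exp (-(∑ l, a l * (2:ℝ) ^ (2 / eps l)))
        ≤ a k * (2 / eps k) * x ^ (2 / eps k - 1)
          * Real.exp (-(∑ l, a l * (2:ℝ) ^ (2 / eps l))) := by
          refine mul_le_mul_of_nonneg_right ?_ (Real.exp_nonneg _)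
          exact mul_le_mul_of_nonneg_left h1 (mul_nonneg (hA k).le (hc k).le)
      _ ≤ hfun x := by
          refine mul_le_mul_of_nonneg_left h2 ?_
          exact mul_nonneg (mul_nonneg (hA k).le (hc k).le) (Real.rpow_nonneg hx0.le _)
  have hElb : ENNReal.ofReal (a k * (2 / eps k) * (2:ℝ) ^ (2 / eps k - 1)
      * Real.exp (-(∑ l, a l * (2:ℝ) ^ (2 / eps l))))
        ≤ ℙ {ω | ∀ l, l ≠ k → R k ω < R l ω} := by
    rw [hE0, key 0 le_rfl]
    calc ENNReal.ofReal (a k * (2 / eps k) * (2:ℝ) ^ (2 / eps k - 1)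
          * Real.exp (-(∑ l, a l * (2:ℝ) ^ (2 / eps l))))
        = ∫⁻ _ in Set.Ioc (1:ℝ) 2, ENNReal.ofReal (a k * (2 / eps k) * (2:ℝ) ^ (2 / eps k - 1)
          * Real.exp (-(∑ l, a l * (2:ℝ) ^ (2 / eps l)))) := by
          rw [setLIntegral_const, Real.volume_Ioc]
          norm_num
      _ ≤ ∫⁻ x in Set.Ioc (1:ℝ) 2, ENNReal.ofReal (hfun x) :=
          setLIntegral_mono' measurableSet_Ioc fun x hx => ENNReal.ofReal_le_ofReal (hlb x hx)
      _ ≤ ∫⁻ x in Set.Ioi 0, ENNReal.ofReal (hfun x) :=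
          lintegral_mono_set (fun x hx => lt_trans one_pos hx.1)
  have hpkpos : 0 < pk := by
    rw [hpk]
    refine ENNReal.toReal_pos ?_ (measure_ne_top _ _)
    exact ne_of_gt (lt_of_lt_of_le (ENNReal.ofReal_pos.mpr hδ) hElb)
  refine ⟨hpkpos, fun r hr => ?_⟩
  set u := r / 2 with hu
  have hu0 : 0 < u := by positivity
  have hur : u < r := by rw [hu]; linarith
  have hcontOn : ContinuousOn hfun (Set.Ioi 0) := by
    intro x hx
    have h1 : ContinuousAt (fun x : ℝ => x ^ (2 / eps k - 1)) x :=
      Real.continuousAt_rpow_const x _ (Or.inl (ne_of_gt hx))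
    have hsum : Continuous fun x : ℝ => ∑ l, a l * x ^ (2 / eps l) :=
      continuous_finset_sum _ fun l _ =>
        continuous_const.mul (Real.continuous_rpow_const (hc l).le)
    exact (((continuousAt_const.mul h1).mul
      (Real.continuous_exp.continuousAt.comp (hsum.neg.continuousAt)))).continuousWithinAt
  have hmeasOn : AEStronglyMeasurable hfun (volume.restrict (Set.Ioi 0)) :=
    hcontOn.aestronglyMeasurable measurableSet_Ioi
  have hIntOn : IntegrableOn hfun (Set.Ioi u) := by
    constructor
    · exact hmeasOn.mono_measure (Measure.restrict_mono (Set.Ioi_subset_Ioi hu0.le) le_rfl)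
    · have hae : 0 ≤ᵐ[volume.restrict (Set.Ioi u)] hfun := by
        filter_upwards [ae_restrict_mem measurableSet_Ioi] with x hx
        exact hnnIoi x (lt_trans hu0 hx)
      rw [hasFiniteIntegral_iff_ofReal hae, ← key u hu0.le]
      exact measure_lt_top _ _
  have hT : ∀ s : ℝ, u ≤ s →
      (ℙ {ω | s < R k ω ∧ ∀ l, l ≠ k → R k ω < R l ω}).toReal
        = (∫ x in Set.Ioi u, hfun x) - ∫ x in u..s, hfun x := by
    intro s hus
    have hs0 : (0:ℝ) ≤ s := le_trans hu0.le hus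
    have hIntS : IntegrableOn hfun (Set.Ioi s) :=
      hIntOn.mono_set (Set.Ioi_subset_Ioi hus)
    have hIntC : IntegrableOn hfun (Set.Ioc u s) :=
      hIntOn.mono_set Set.Ioc_subset_Ioi_self
    have h1 : ∫ x in Set.Ioi s, hfun x
        = (ℙ {ω | s < R k ω ∧ ∀ l, l ≠ k → R k ω < R l ω}).toReal := by
      have hae : 0 ≤ᵐ[volume.restrict (Set.Ioi s)] hfun := by
        filter_upwards [ae_restrict_mem measurableSet_Ioi] with x hx
        exact hnnIoi x (lt_of_le_of_lt hs0 hx)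
      rw [integral_eq_lintegral_of_nonneg_ae hae hIntS.1, ← key s hs0]
    have h2 : ∫ x in Set.Ioi u, hfun x
        = (∫ x in Set.Ioc u s, hfun x) + ∫ x in Set.Ioi s, hfun x := by
      rw [← setIntegral_union (Set.Ioc_disjoint_Ioi le_rfl) measurableSet_Ioi hIntC hIntS,
        Set.Ioc_union_Ioi_eq_Ioi hus]
    rw [← h1, intervalIntegral.integral_of_le hus, h2]
    ring
  have hii : IntervalIntegrable hfun volume u r :=
    (intervalIntegrable_iff_integrableOn_Ioc_of_le hur.le).mpr
      (hIntOn.mono_set Set.Ioc_subset_Ioi_self)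
  have hd : HasDerivAt (fun s => ∫ x in u..s, hfun x) (hfun r) r :=
    intervalIntegral.integral_hasDerivAt_right hii
      ⟨Set.Ioi 0, isOpen_Ioi.mem_nhds hr, hmeasOn⟩
      (hcontOn.continuousAt (isOpen_Ioi.mem_nhds hr))
  have hF : HasDerivAt (fun s => ((∫ x in Set.Ioi u, hfun x) - ∫ x in u..s, hfun x) / pk)
      (-(hfun r) / pk) r :=
    (hd.const_sub (∫ x in Set.Ioi u, hfun x)).div_const pk
  have heq : (fun s : ℝ => (ℙ {ω | s < R k ω ∧ ∀ l, l ≠ k → R k ω < R l ω}).toReal / pk)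
      =ᶠ[nhds r] fun s => ((∫ x in Set.Ioi u, hfun x) - ∫ x in u..s, hfun x) / pk := by
    filter_upwards [isOpen_Ioi.mem_nhds (Set.mem_Ioi.mpr hur)] with s hs
    rw [hT s (le_of_lt hs)]
  have hfinal := hF.congr_of_eventuallyEq heq
  refine hfinal.congr_deriv ?_
  have hsum : (∑ l, lam l * π * (P l * B l) ^ (2 / eps l) * m l * r ^ (2 / eps l))
      = ∑ l, a l * r ^ (2 / eps l) :=
    Finset.sum_congr rfl fun l _ => by rw [ha l]
  rw [hsum, hfun_def]
  simp only
  rw [ha k]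
  have hek : eps k ≠ 0 := ne_of_gt (hepspos k)
  have hpk0 : pk ≠ 0 := ne_of_gt hpkpos
  field_simp
end

section
/- Let λ > 0, P > 0, B > 0, ε > 2, and let μ be a probability measure on (0,∞) such that m = ∫ ψ^{2/ε} dμ(ψ) is finite. Consider the map T : ℝ² × (0,∞) → [0,∞) defined by T(x, ψ) = ‖x‖^{ε} / (P·B·ψ). Then the pushforward under T of the product measure λ·(Lebesgue measure on ℝ²) ⊗ μ is the measure on [0,∞) that is absolutely continuous with respect to Lebesgue measure with density r ↦ λ·(2π/ε)·(P·B)^{2/ε}·m·r^{2/ε − 1}. Equivalently, for every s ≥ 0, λ·∫ (area of {x ∈ ℝ² : ‖x‖^{ε}/(P·B·ψ) ≤ s}) dμ(ψ) = λ·π·(P·B)^{2/ε}·m·s^{2/ε}. -/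
open MeasureTheory Real

/-- The pushforward of the marked planar intensity measure `λ·(Lebesgue ⊗ μ)` under
`(x, ψ) ↦ ‖x‖^ε / (P B ψ)` is absolutely continuous with respect to Lebesgue measure on
`[0, ∞)` with density `r ↦ λ (2π/ε) (P B)^{2/ε} m r^{2/ε - 1}`; equivalently, its value on
`[0, s]` is `λ π (P B)^{2/ε} m s^{2/ε}` for every `s ≥ 0`. -/
theorem stmt5 (lam P B eps : ℝ) (hlam : 0 < lam) (hP : 0 < P) (hB : 0 < B) (heps : 2 < eps)
    (μ : Measure ℝ) [IsProbabilityMeasure μ] (hμsupp : μ (Set.Iic 0) = 0)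
    (hint : Integrable (fun ψ : ℝ => ψ ^ (2 / eps)) μ)
    (m : ℝ) (hm : m = ∫ ψ, ψ ^ (2 / eps) ∂μ) :
    Measure.map (fun p : EuclideanSpace ℝ (Fin 2) × ℝ => ‖p.1‖ ^ eps / (P * B * p.2))
        ((ENNReal.ofReal lam • (volume : Measure (EuclideanSpace ℝ (Fin 2)))).prod μ)
      = volume.withDensity (fun r : ℝ =>
          Set.indicator (Set.Ioi (0:ℝ))
            (fun r => ENNReal.ofReal (lam * (2 * π / eps) * (P * B) ^ (2 / eps) * m *
              r ^ (2 / eps - 1))) r) ∧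
    ∀ s : ℝ, 0 ≤ s →
      lam * ∫ ψ, (volume {x : EuclideanSpace ℝ (Fin 2) | ‖x‖ ^ eps / (P * B * ψ) ≤ s}).toReal ∂μ
        = lam * π * (P * B) ^ (2 / eps) * m * s ^ (2 / eps) := by
  have heps0 : (0:ℝ) < eps := by linarith
  have h2e : (0:ℝ) < 2 / eps := by positivity
  have hae : ∀ᵐ ψ ∂μ, 0 < ψ := by
    rw [ae_iff]
    simpa only [not_lt] using (show μ {a : ℝ | a ≤ 0} = 0 from hμsupp)
  have hm0 : 0 ≤ m := by
    rw [hm]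
    exact integral_nonneg_of_ae (hae.mono fun ψ hψ => Real.rpow_nonneg hψ.le _)
  -- the volume of a slice
  have hvol : ∀ ψ : ℝ, 0 < ψ → ∀ s : ℝ, 0 ≤ s →
      volume {x : EuclideanSpace ℝ (Fin 2) | ‖x‖ ^ eps / (P * B * ψ) ≤ s}
        = ENNReal.ofReal (π * (P * B) ^ (2 / eps) * s ^ (2 / eps) * ψ ^ (2 / eps)) := by
    intro ψ hψ s hs
    have hc : (0:ℝ) ≤ P * B * ψ * s := by positivity
    have hset : {x : EuclideanSpace ℝ (Fin 2) | ‖x‖ ^ eps / (P * B * ψ) ≤ s}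
        = Metric.closedBall 0 ((P * B * ψ * s) ^ (1 / eps)) := by
      ext x
      have hthis : ((P * B * ψ * s) ^ (1 / eps)) ^ eps = P * B * ψ * s := by
        rw [← Real.rpow_mul hc, one_div, inv_mul_cancel₀ heps0.ne', Real.rpow_one]
      simp only [Set.mem_setOf_eq, Metric.mem_closedBall, dist_zero_right]
      rw [div_le_iff₀ (by positivity), show s * (P * B * ψ) = P * B * ψ * s from by ring]
      nth_rewrite 1 [← hthis]
      exact Real.rpow_le_rpow_iff (norm_nonneg x) (Real.rpow_nonneg hc _) heps0
    have hR : (0:ℝ) ≤ (P * B * ψ * s) ^ (1 / eps) := Real.rpow_nonneg hc _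
    rw [hset, EuclideanSpace.volume_closedBall, Fintype.card_fin,
      ← ENNReal.ofReal_pow hR, ← ENNReal.ofReal_mul (by positivity)]
    congr 1
    have hg : Real.sqrt π ^ 2 / Real.Gamma ((2:ℕ) / 2 + 1) = π := by
      rw [Real.sq_sqrt pi_pos.le, show ((2:ℕ):ℝ) / 2 + 1 = 2 by norm_num, Real.Gamma_two,
        div_one]
    rw [hg, ← Real.rpow_natCast ((P * B * ψ * s) ^ (1 / eps)) 2, ← Real.rpow_mul hc,
      show (1 / eps) * ((2:ℕ):ℝ) = 2 / eps by push_cast; ring,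
      show P * B * ψ * s = (P * B) * ψ * s by ring,
      Real.mul_rpow (by positivity) hs, Real.mul_rpow (by positivity) hψ.le]
    ring
  set T : EuclideanSpace ℝ (Fin 2) × ℝ → ℝ := fun p => ‖p.1‖ ^ eps / (P * B * p.2) with hTdef
  have hT : Measurable T := by fun_prop
  set Λ : Measure (EuclideanSpace ℝ (Fin 2) × ℝ) :=
    (ENNReal.ofReal lam • (volume : Measure (EuclideanSpace ℝ (Fin 2)))).prod μ with hΛdef
  set F : ℝ → ENNReal := fun s =>
    if 0 ≤ s then ENNReal.ofReal (lam * π * (P * B) ^ (2 / eps) * m * s ^ (2 / eps)) else 0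
    with hFdef
  have hFtop : ∀ s, F s ≠ ⊤ := by
    intro s; rw [hFdef]; dsimp only; split_ifs <;> simp
  -- value of the pushforward on Iic s
  have hνIic : ∀ s : ℝ, Measure.map T Λ (Set.Iic s) = F s := by
    intro s
    rw [Measure.map_apply hT measurableSet_Iic, hΛdef,
      Measure.prod_apply_symm (hT measurableSet_Iic)]
    by_cases hs : 0 ≤ s
    · have hcongr : ∀ᵐ ψ ∂μ,
          (ENNReal.ofReal lam • (volume : Measure (EuclideanSpace ℝ (Fin 2))))
              ((fun x => (x, ψ)) ⁻¹' (T ⁻¹' Set.Iic s))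
            = ENNReal.ofReal lam *
              ENNReal.ofReal (π * (P * B) ^ (2 / eps) * s ^ (2 / eps) * ψ ^ (2 / eps)) := by
        filter_upwards [hae] with ψ hψ
        rw [Measure.smul_apply, smul_eq_mul]
        congr 1
        exact hvol ψ hψ s hs
      rw [lintegral_congr_ae hcongr, lintegral_const_mul _ (by fun_prop)]
      have hInt : Integrable
          (fun ψ : ℝ => π * (P * B) ^ (2 / eps) * s ^ (2 / eps) * ψ ^ (2 / eps)) μ :=
        hint.const_mul _
      have hnn : 0 ≤ᵐ[μ]
          fun ψ : ℝ => π * (P * B) ^ (2 / eps) * s ^ (2 / eps) * ψ ^ (2 / eps) :=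
        hae.mono fun ψ hψ => by positivity
      rw [← ofReal_integral_eq_lintegral_ofReal hInt hnn, integral_const_mul, ← hm,
        hFdef]
      simp only [if_pos hs]
      rw [← ENNReal.ofReal_mul hlam.le]
      congr 1
      ring
    · have hcongr : ∀ᵐ ψ ∂μ,
          (ENNReal.ofReal lam • (volume : Measure (EuclideanSpace ℝ (Fin 2))))
              ((fun x => (x, ψ)) ⁻¹' (T ⁻¹' Set.Iic s)) = 0 := by
        filter_upwards [hae] with ψ hψ
        have hempty : (fun x : EuclideanSpace ℝ (Fin 2) => (x, ψ)) ⁻¹' (T ⁻¹' Set.Iic s)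
            = ∅ := by
          ext x
          simp only [Set.mem_preimage, Set.mem_Iic, Set.mem_empty_iff_false, iff_false,
            not_le, hTdef]
          have h1 : (0:ℝ) ≤ ‖x‖ ^ eps / (P * B * ψ) := by positivity
          linarith [not_le.mp hs]
        rw [hempty]
        simp
      rw [lintegral_congr_ae hcongr, lintegral_zero, hFdef]
      simp [hs]
  -- value of the density measure on Iic s
  set C : ℝ := lam * (2 * π / eps) * (P * B) ^ (2 / eps) * m with hCdef
  have hC0 : 0 ≤ C := mul_nonneg (by positivity) hm0
  have hκIic : ∀ s : ℝ,
      (volume.withDensity (fun r : ℝ =>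
        Set.indicator (Set.Ioi (0:ℝ))
          (fun r => ENNReal.ofReal (C * r ^ (2 / eps - 1))) r)) (Set.Iic s) = F s := by
    intro s
    rw [withDensity_apply _ measurableSet_Iic,
      lintegral_indicator measurableSet_Ioi,
      Measure.restrict_restrict measurableSet_Ioi, Set.Ioi_inter_Iic]
    by_cases hs : 0 ≤ s
    · have hII : IntervalIntegrable (fun r : ℝ => r ^ (2 / eps - 1)) volume 0 s :=
        intervalIntegral.intervalIntegrable_rpow' (by linarith)
      have hIntOn : IntegrableOn (fun r : ℝ => C * r ^ (2 / eps - 1)) (Set.Ioc 0 s) :=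
        ((intervalIntegrable_iff_integrableOn_Ioc_of_le hs).mp hII).const_mul _
      have hnn2 : 0 ≤ᵐ[volume.restrict (Set.Ioc 0 s)]
          fun r : ℝ => C * r ^ (2 / eps - 1) := by
        filter_upwards [ae_restrict_mem measurableSet_Ioc] with r hr
        exact mul_nonneg hC0 (Real.rpow_nonneg hr.1.le _)
      rw [← ofReal_integral_eq_lintegral_ofReal hIntOn hnn2,
        ← intervalIntegral.integral_of_le hs, intervalIntegral.integral_const_mul,
        integral_rpow (Or.inl (by linarith)),
        show 2 / eps - 1 + 1 = 2 / eps by ring, Real.zero_rpow h2e.ne', hFdef]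
      simp only [if_pos hs]
      congr 1
      rw [hCdef]
      field_simp
      ring
    · rw [Set.Ioc_eq_empty (by simpa using fun h : (0:ℝ) < s => hs h.le),
        Measure.restrict_empty, lintegral_zero_measure, hFdef]
      simp [hs]
  refine ⟨?_, ?_⟩
  · -- extensionality via Ioc intervals
    have hdiff : ∀ (ρ : Measure ℝ), (∀ s, ρ (Set.Iic s) = F s) →
        ∀ a b : ℝ, a < b → ρ (Set.Ioc a b) = F b - F a := by
      intro ρ hρ a b hab
      rw [← Set.Iic_sdiff_Iic,
        measure_diff (Set.Iic_subset_Iic.2 hab.le) measurableSet_Iic.nullMeasurableSet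
          (by rw [hρ]; exact hFtop a),
        hρ, hρ]
    refine Measure.ext_of_Ioc' _ _ (fun a b hab => ?_) (fun a b hab => ?_)
    · rw [hdiff _ hνIic a b hab]
      exact ne_top_of_le_ne_top (hFtop b) tsub_le_self
    · rw [hdiff _ hνIic a b hab, hdiff _ hκIic a b hab]
  · intro s hs
    have hcongr : (fun ψ : ℝ =>
          (volume {x : EuclideanSpace ℝ (Fin 2) | ‖x‖ ^ eps / (P * B * ψ) ≤ s}).toReal)
        =ᵐ[μ] fun ψ : ℝ => π * (P * B) ^ (2 / eps) * s ^ (2 / eps) * ψ ^ (2 / eps) := by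
      filter_upwards [hae] with ψ hψ
      rw [hvol ψ hψ s hs, ENNReal.toReal_ofReal (by positivity)]
    rw [integral_congr_ae hcongr, integral_const_mul, ← hm]
    ring
end

section
/- Let 0 < a < 1 and z ∈ ℂ. Then the integral ∫_0^1 (e^{z u} − 1)·u^{−a−1} du converges absolutely and satisfies a·∫_0^1 (e^{z u} − 1)·u^{−a−1} du = Σ_{n=1}^∞ (a/(n − a))·z^n/n! = 1 − F_a(z), where F_a is the confluent hypergeometric function ₁F₁(−a; 1 − a; ·). -/
set_option maxHeartbeats 1000000


open MeasureTheory Real Complex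

/-- The confluent hypergeometric function `₁F₁(-a; 1-a; z)`, defined by its everywhere-convergent
power series `Σ_n ((-a)_n / (1-a)_n) zⁿ/n!`, where `(x)_n` is the (ascending) Pochhammer symbol. -/
noncomputable def confluentF (a : ℝ) (z : ℂ) : ℂ :=
  ∑' n : ℕ, ((ascPochhammer ℂ n).eval (-(a : ℂ)) / (ascPochhammer ℂ n).eval (1 - (a : ℂ)))
    * z ^ n / (Nat.factorial n : ℂ)

lemma aux_hasSum_exp_sub_one (w : ℂ) :
    HasSum (fun n : ℕ => w ^ (n + 1) / ((n + 1).factorial : ℂ)) (Complex.exp w - 1) := by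
  have h : HasSum (fun n : ℕ => w ^ n / (n.factorial : ℂ)) (Complex.exp w) := by
    simpa [Complex.exp_eq_exp_ℂ] using NormedSpace.expSeries_div_hasSum_exp w
  rw [hasSum_nat_add_iff (f := fun n : ℕ => w ^ n / (n.factorial : ℂ)) 1]
  simpa using h

lemma aux_norm_exp_sub_one_le (w : ℂ) :
    ‖Complex.exp w - 1‖ ≤ ‖w‖ * Real.exp ‖w‖ := by
  have h1 := aux_hasSum_exp_sub_one w
  have h2 : HasSum (fun n : ℕ => ‖w‖ ^ (n + 1) / ((n + 1).factorial : ℝ))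
      (Real.exp ‖w‖ - 1) := by
    have h : HasSum (fun n : ℕ => ‖w‖ ^ n / (n.factorial : ℝ)) (Real.exp ‖w‖) := by
      simpa [Real.exp_eq_exp_ℝ] using NormedSpace.expSeries_div_hasSum_exp ‖w‖
    rw [hasSum_nat_add_iff (f := fun n : ℕ => ‖w‖ ^ n / (n.factorial : ℝ)) 1]
    simpa using h
  have hnorm : ∀ n : ℕ, ‖w ^ (n + 1) / ((n + 1).factorial : ℂ)‖
      = ‖w‖ ^ (n + 1) / ((n + 1).factorial : ℝ) := by
    intro n; simp [norm_div, norm_pow]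
  have hle : ‖Complex.exp w - 1‖ ≤ Real.exp ‖w‖ - 1 := by
    rw [← h1.tsum_eq, ← h2.tsum_eq]
    calc ‖∑' n : ℕ, w ^ (n + 1) / ((n + 1).factorial : ℂ)‖
        ≤ ∑' n : ℕ, ‖w ^ (n + 1) / ((n + 1).factorial : ℂ)‖ :=
          norm_tsum_le_tsum_norm (by simpa [hnorm] using h2.summable)
      _ = ∑' n : ℕ, ‖w‖ ^ (n + 1) / ((n + 1).factorial : ℝ) := by simp [hnorm]
  refine hle.trans ?_
  set t := ‖w‖ with ht
  have h3 : -t + 1 ≤ Real.exp (-t) := Real.add_one_le_exp (-t)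
  have h4 : Real.exp (-t) * Real.exp t = 1 := by rw [← Real.exp_add]; simp
  nlinarith [Real.exp_pos t]

/-- For `0 < a < 1` and `z ∈ ℂ`, the integral `∫_0^1 (e^{zu} - 1) u^{-a-1} du` converges
absolutely, and `a` times it equals `Σ_{n≥1} (a/(n-a)) zⁿ/n! = 1 - ₁F₁(-a; 1-a; z)`. -/
theorem stmt6 (a : ℝ) (ha0 : 0 < a) (ha1 : a < 1) (z : ℂ) :
    IntegrableOn (fun u : ℝ => (Complex.exp (z * (u : ℂ)) - 1) * ((u ^ (-a - 1) : ℝ) : ℂ))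
        (Set.Ioc (0:ℝ) 1) ∧
    (a : ℂ) * ∫ u in Set.Ioc (0:ℝ) 1, (Complex.exp (z * (u : ℂ)) - 1) * ((u ^ (-a - 1) : ℝ) : ℂ)
      = ∑' n : ℕ, ((a : ℂ) / (((n : ℂ) + 1) - (a : ℂ))) * z ^ (n + 1) / (Nat.factorial (n + 1) : ℂ) ∧
    (∑' n : ℕ, ((a : ℂ) / (((n : ℂ) + 1) - (a : ℂ))) * z ^ (n + 1) / (Nat.factorial (n + 1) : ℂ))
      = 1 - confluentF a z := by
  -- notation
  set f : ℝ → ℂ := fun u : ℝ => (Complex.exp (z * (u : ℂ)) - 1) * ((u ^ (-a - 1) : ℝ) : ℂ) with hf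
  set F : ℕ → ℝ → ℂ := fun n u => (z ^ (n + 1) / ((n + 1).factorial : ℂ)) * ((u ^ ((n : ℝ) - a) : ℝ) : ℂ)
    with hF
  have hden : ∀ n : ℕ, ((n : ℂ) + 1) - (a : ℂ) ≠ 0 := by
    intro n
    have h : ((n : ℝ) + 1 - a : ℝ) ≠ 0 := by
      have := Nat.cast_nonneg (α := ℝ) n; intro hc; linarith
    have : (((n : ℝ) + 1 - a : ℝ) : ℂ) ≠ 0 := Complex.ofReal_ne_zero.2 h
    convert this using 1; push_cast; ring
  -- integrability of rpow pieces
  have hint_rpow : ∀ r : ℝ, -1 < r → IntegrableOn (fun u : ℝ => u ^ r) (Set.Ioc (0:ℝ) 1) :=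
    fun r hr => (intervalIntegral.intervalIntegrable_rpow' (a := 0) (b := 1) hr).1
  have hval : ∀ r : ℝ, -1 < r → ∫ u in Set.Ioc (0:ℝ) 1, u ^ r = 1 / (r + 1) := by
    intro r hr
    rw [← intervalIntegral.integral_of_le (zero_le_one)]
    rw [integral_rpow (Or.inl hr), Real.one_rpow, Real.zero_rpow (by linarith)]
    ring
  -- part 1 : integrability
  have hcont : ContinuousOn (fun u : ℝ => u ^ (-a - 1)) (Set.Ioc (0:ℝ) 1) :=
    ContinuousOn.rpow_const continuousOn_id (fun x hx => Or.inl (ne_of_gt hx.1))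
  have hmeas : AEStronglyMeasurable f (volume.restrict (Set.Ioc (0:ℝ) 1)) := by
    apply AEStronglyMeasurable.mul
    · exact (Continuous.aestronglyMeasurable (by continuity))
    · exact ((Complex.continuous_ofReal.comp_continuousOn hcont).aestronglyMeasurable
        measurableSet_Ioc)
  have hC : (0:ℝ) ≤ ‖z‖ * Real.exp ‖z‖ := by positivity
  have hbound : ∀ u ∈ Set.Ioc (0:ℝ) 1, ‖f u‖ ≤ (‖z‖ * Real.exp ‖z‖) * u ^ (-a) := by
    intro u hu
    obtain ⟨hu0, hu1⟩ := hu
    have hru : (0:ℝ) ≤ u ^ (-a - 1) := Real.rpow_nonneg hu0.le _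
    have h1 : ‖f u‖ = ‖Complex.exp (z * u) - 1‖ * u ^ (-a - 1) := by
      simp only [hf]
      rw [norm_mul, Complex.norm_real, Real.norm_of_nonneg hru]
    rw [h1]
    have h2 : ‖Complex.exp (z * u) - 1‖ ≤ (‖z‖ * u) * Real.exp ‖z‖ := by
      refine (aux_norm_exp_sub_one_le _).trans ?_
      have hn : ‖z * (u:ℂ)‖ = ‖z‖ * u := by
        rw [norm_mul, Complex.norm_real, Real.norm_of_nonneg hu0.le]
      rw [hn]
      have : Real.exp (‖z‖ * u) ≤ Real.exp ‖z‖ :=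
        Real.exp_le_exp.2 (by nlinarith [norm_nonneg z])
      exact mul_le_mul_of_nonneg_left this (mul_nonneg (norm_nonneg z) hu0.le)
    have h3 : u * u ^ (-a - 1) = u ^ (-a) := by
      rw [show u * u ^ (-a - 1) = u ^ (1:ℝ) * u ^ (-a - 1) from by rw [Real.rpow_one],
        ← Real.rpow_add hu0]
      norm_num
    calc ‖Complex.exp (z * u) - 1‖ * u ^ (-a - 1)
        ≤ ((‖z‖ * u) * Real.exp ‖z‖) * u ^ (-a - 1) :=
          mul_le_mul_of_nonneg_right h2 hru
      _ = (‖z‖ * Real.exp ‖z‖) * (u * u ^ (-a - 1)) := by ring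
      _ = (‖z‖ * Real.exp ‖z‖) * u ^ (-a) := by rw [h3]
  have hintf : IntegrableOn f (Set.Ioc (0:ℝ) 1) := by
    refine Integrable.mono' (((hint_rpow (-a) (by linarith)).const_mul (‖z‖ * Real.exp ‖z‖))) hmeas ?_
    filter_upwards [ae_restrict_mem measurableSet_Ioc] with u hu
    exact hbound u hu
  refine ⟨hintf, ?_, ?_⟩
  · -- part 2 : integral value
    -- pointwise series representation
    have hrepr : ∀ u ∈ Set.Ioc (0:ℝ) 1, HasSum (fun n => F n u) (f u) := by
      intro u hu
      obtain ⟨hu0, _⟩ := hu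
      have h := (aux_hasSum_exp_sub_one (z * u)).mul_right ((u ^ (-a - 1) : ℝ) : ℂ)
      have heq : (fun n : ℕ => F n u)
          = fun n : ℕ => (z * u) ^ (n + 1) / ((n + 1).factorial : ℂ) * ((u ^ (-a - 1) : ℝ) : ℂ) := by
        funext n
        simp only [hF]
        have hpow : ((u ^ ((n:ℝ) - a) : ℝ) : ℂ)
            = ((u ^ (n + 1) : ℝ) : ℂ) * ((u ^ (-a - 1) : ℝ) : ℂ) := by
          rw [← Complex.ofReal_mul]
          congr 1
          rw [← Real.rpow_natCast u (n + 1), ← Real.rpow_add hu0]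
          congr 1
          push_cast; ring
        rw [hpow]
        push_cast
        ring
      rw [heq]
      exact h
    have hFint : ∀ n : ℕ, IntegrableOn (F n) (Set.Ioc (0:ℝ) 1) := by
      intro n
      exact ((hint_rpow ((n:ℝ) - a) (by linarith [Nat.cast_nonneg (α := ℝ) n])).ofReal).const_mul _
    have hFnormval : ∀ n : ℕ, ∫ u in Set.Ioc (0:ℝ) 1, ‖F n u‖
        = (‖z‖ ^ (n + 1) / ((n + 1).factorial : ℝ)) * (1 / ((n : ℝ) - a + 1)) := by
      intro n
      have : ∀ u ∈ Set.Ioc (0:ℝ) 1, ‖F n u‖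
          = (‖z‖ ^ (n + 1) / ((n + 1).factorial : ℝ)) * u ^ ((n:ℝ) - a) := by
        intro u hu
        simp only [hF]
        rw [norm_mul, norm_div, norm_pow, Complex.norm_natCast, Complex.norm_real,
          Real.norm_of_nonneg (Real.rpow_nonneg hu.1.le _)]
      rw [setIntegral_congr_fun measurableSet_Ioc this, integral_const_mul,
        hval _ (by linarith [Nat.cast_nonneg (α := ℝ) n])]
    have hsummable_norm : Summable fun n : ℕ => ∫ u in Set.Ioc (0:ℝ) 1, ‖F n u‖ := by
      have hc : Summable fun n : ℕ => ‖z‖ ^ (n + 1) / ((n + 1).factorial : ℝ) := by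
        exact (summable_nat_add_iff 1).2 (Real.summable_pow_div_factorial ‖z‖)
      refine Summable.of_nonneg_of_le (fun n => ?_) (fun n => ?_) (hc.mul_right (1 / (1 - a)))
      · exact integral_nonneg fun u => norm_nonneg _
      · rw [hFnormval n]
        have h1 : (0:ℝ) < 1 - a := by linarith
        have h2 : (1 - a : ℝ) ≤ (n : ℝ) - a + 1 := by
          have := Nat.cast_nonneg (α := ℝ) n; linarith
        have : 1 / ((n:ℝ) - a + 1) ≤ 1 / (1 - a) := by
          apply one_div_le_one_div_of_le h1 h2
        have hnn : (0:ℝ) ≤ ‖z‖ ^ (n + 1) / ((n + 1).factorial : ℝ) := by positivity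
        exact mul_le_mul_of_nonneg_left this hnn
    have hswap : ∑' n : ℕ, (∫ u in Set.Ioc (0:ℝ) 1, F n u)
        = ∫ u in Set.Ioc (0:ℝ) 1, ∑' n : ℕ, F n u :=
      integral_tsum_of_summable_integral_norm hFint hsummable_norm
    have heqint : ∫ u in Set.Ioc (0:ℝ) 1, ∑' n : ℕ, F n u = ∫ u in Set.Ioc (0:ℝ) 1, f u := by
      apply setIntegral_congr_fun measurableSet_Ioc
      intro u hu
      exact (hrepr u hu).tsum_eq
    have hFival : ∀ n : ℕ, ∫ u in Set.Ioc (0:ℝ) 1, F n u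
        = (z ^ (n + 1) / ((n + 1).factorial : ℂ)) * ((1 / ((n:ℝ) - a + 1) : ℝ) : ℂ) := by
      intro n
      have hco : ∫ u in Set.Ioc (0:ℝ) 1, ((u ^ ((n:ℝ) - a) : ℝ) : ℂ)
          = ((∫ u in Set.Ioc (0:ℝ) 1, u ^ ((n:ℝ) - a) : ℝ) : ℂ) := integral_ofReal
      rw [hF]
      simp only
      rw [integral_const_mul, hco,
        hval _ (by linarith [Nat.cast_nonneg (α := ℝ) n])]
    calc (a : ℂ) * ∫ u in Set.Ioc (0:ℝ) 1, f u
        = (a : ℂ) * ∑' n : ℕ, (∫ u in Set.Ioc (0:ℝ) 1, F n u) := by rw [hswap, heqint]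
      _ = ∑' n : ℕ, (a : ℂ) * (∫ u in Set.Ioc (0:ℝ) 1, F n u) := by rw [tsum_mul_left]
      _ = ∑' n : ℕ, ((a : ℂ) / (((n : ℂ) + 1) - (a : ℂ))) * z ^ (n + 1) / (Nat.factorial (n + 1) : ℂ) := by
        congr 1; funext n
        rw [hFival n]
        have hfac : ((n + 1).factorial : ℂ) ≠ 0 := Nat.cast_ne_zero.2 (Nat.factorial_ne_zero _)
        have hden' := hden n
        have hco : ((1 / ((n:ℝ) - a + 1) : ℝ) : ℂ) = 1 / (((n : ℂ) + 1) - (a : ℂ)) := by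
          push_cast; congr 1; ring
        rw [hco]
        ring
  · -- part 3 : Pochhammer identity
    set P : ℕ → ℂ := fun n => (ascPochhammer ℂ n).eval (1 - (a : ℂ)) with hP
    have hPne : ∀ n, P n ≠ 0 := by
      intro n
      induction n with
      | zero => simp [hP]
      | succ n ih =>
        simp only [hP]
        rw [ascPochhammer_succ_eval]
        refine mul_ne_zero ih ?_
        have h : ((1 - a + (n:ℝ) : ℝ) : ℂ) ≠ 0 :=
          Complex.ofReal_ne_zero.2
            (by have := Nat.cast_nonneg (α := ℝ) n; intro hc; linarith)
        convert h using 1; push_cast; ring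
    have hnum : ∀ n : ℕ, (ascPochhammer ℂ (n + 1)).eval (-(a : ℂ)) = -(a : ℂ) * P n := by
      intro n
      rw [ascPochhammer_succ_left, Polynomial.eval_mul, Polynomial.eval_X, Polynomial.eval_comp,
        Polynomial.eval_add, Polynomial.eval_X, Polynomial.eval_one, hP]
      congr 2
      ring
    have hterm : ∀ n : ℕ,
        ((ascPochhammer ℂ (n+1)).eval (-(a : ℂ)) / (ascPochhammer ℂ (n+1)).eval (1 - (a : ℂ)))
          * z ^ (n+1) / (Nat.factorial (n+1) : ℂ)
        = -(((a : ℂ) / (((n : ℂ) + 1) - (a : ℂ))) * z ^ (n + 1) / (Nat.factorial (n + 1) : ℂ)) := by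
      intro n
      rw [hnum, ascPochhammer_succ_eval]
      have hc : ((1:ℂ) - a + n) = ((n : ℂ) + 1) - (a : ℂ) := by ring
      rw [show (-(a:ℂ) * P n) = P n * -(a:ℂ) by ring,
        show Polynomial.eval (1 - (a:ℂ)) (ascPochhammer ℂ n) = P n from rfl,
        mul_div_mul_left _ _ (hPne n), hc]
      ring
    have hgsummable : Summable fun n : ℕ =>
        ((a : ℂ) / (((n : ℂ) + 1) - (a : ℂ))) * z ^ (n + 1) / (Nat.factorial (n + 1) : ℂ) := by
      have hc : Summable fun n : ℕ => ‖z‖ ^ (n + 1) / ((n + 1).factorial : ℝ) :=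
        (summable_nat_add_iff 1).2 (Real.summable_pow_div_factorial ‖z‖)
      apply Summable.of_norm_bounded (hc.mul_left (a / (1 - a)))
      intro n
      rw [norm_div, norm_mul, norm_div]
      have h1 : ‖(((n : ℂ) + 1) - (a : ℂ))‖ = (n : ℝ) + 1 - a := by
        have : (((n : ℂ) + 1) - (a : ℂ)) = (((n : ℝ) + 1 - a : ℝ) : ℂ) := by push_cast; ring
        rw [this, Complex.norm_real,
          Real.norm_of_nonneg (by have := Nat.cast_nonneg (α := ℝ) n; linarith)]
      have h2 : ‖((n+1).factorial : ℂ)‖ = ((n+1).factorial : ℝ) := by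
        rw [Complex.norm_natCast]
      have h3 : ‖(a:ℂ)‖ = a := by rw [Complex.norm_real, Real.norm_of_nonneg ha0.le]
      rw [h1, h2, h3, norm_pow]
      have h4 : a / ((n:ℝ) + 1 - a) ≤ a / (1 - a) := by
        apply div_le_div_of_nonneg_left ha0.le (by linarith) ?_
        have := Nat.cast_nonneg (α := ℝ) n; linarith
      have h5 : (0:ℝ) ≤ ‖z‖ ^ (n + 1) / ((n+1).factorial : ℝ) := by positivity
      calc a / ((n:ℝ) + 1 - a) * ‖z‖ ^ (n+1) / ((n+1).factorial : ℝ)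
          = (a / ((n:ℝ) + 1 - a)) * (‖z‖ ^ (n+1) / ((n+1).factorial : ℝ)) := by ring
        _ ≤ (a / (1 - a)) * (‖z‖ ^ (n+1) / ((n+1).factorial : ℝ)) :=
            mul_le_mul_of_nonneg_right h4 h5
    have htermsum : Summable fun n : ℕ =>
        ((ascPochhammer ℂ n).eval (-(a : ℂ)) / (ascPochhammer ℂ n).eval (1 - (a : ℂ)))
          * z ^ n / (Nat.factorial n : ℂ) := by
      rw [← summable_nat_add_iff 1]
      simp only [hterm]
      exact hgsummable.neg
    rw [confluentF, htermsum.tsum_eq_zero_add]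
    simp only [hterm]
    rw [tsum_neg]
    simp [ascPochhammer_zero]
end

section
/- Let 0 < a < 1 and ω ∈ ℝ. Then the real part of F_a(iω) satisfies Re F_a(iω) = 1 + a·∫_0^1 (1 − cos(ωu))·u^{−a−1} du; in particular Re F_a(iω) ≥ 1 > 0, so F_a(iω) ≠ 0 for every real ω. -/
open MeasureTheory Real Complex

lemma cast_ne (a x : ℝ) (h : 0 < x - a) (n : ℕ) : ((n:ℂ) + x) - a ≠ 0 := by
  have hr : ((n:ℝ) + x) - a ≠ 0 := by
    have := Nat.cast_nonneg (α := ℝ) n; intro hh; nlinarith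
  intro h0; apply hr
  have := congrArg Complex.re h0
  simpa using this

lemma poch_ne (a : ℝ) (ha0 : 0 < a) (ha1 : a < 1) (n : ℕ) :
    (ascPochhammer ℂ n).eval (1 - (a : ℂ)) ≠ 0 := by
  induction n with
  | zero => simp [ascPochhammer_zero]
  | succ n ih =>
    rw [ascPochhammer_succ_eval]
    refine mul_ne_zero ih ?_
    have := cast_ne a 1 (by linarith) n
    intro h; apply this; rw [← h]; push_cast; ring

lemma poch_ratio (a : ℝ) (ha0 : 0 < a) (ha1 : a < 1) (n : ℕ) :
    (ascPochhammer ℂ (n+1)).eval (-(a : ℂ)) / (ascPochhammer ℂ (n+1)).eval (1 - (a : ℂ))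
      = -(a:ℂ) / ((n+1 : ℂ) - a) := by
  induction n with
  | zero => simp [ascPochhammer_one]
  | succ n ih =>
    have hD := poch_ne a ha0 ha1 (n+1)
    have h1 : ((n:ℂ) + 1) - a ≠ 0 := cast_ne a 1 (by linarith) n
    have h2 : ((n:ℂ) + 2) - a ≠ 0 := cast_ne a 2 (by linarith) n
    rw [ascPochhammer_succ_eval (n+1) (-(a:ℂ)), ascPochhammer_succ_eval (n+1) (1-(a:ℂ)), ← div_mul_div_comm, ih]
    push_cast
    rw [div_mul_div_comm]
    have h2' : 1 - (a:ℂ) + ((n:ℂ) + 1) ≠ 0 := by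
      intro h; apply h2; rw [← h]; ring
    have h2'' : (n:ℂ) + 1 + 1 - a ≠ 0 := by
      intro h; apply h2; rw [← h]; ring
    rw [div_eq_div_iff (mul_ne_zero h1 h2') h2'']
    ring


lemma one_sub_cos (x : ℝ) :
    1 - Real.cos x = ∑' k : ℕ, (-1:ℝ)^k * x^(2*k+2) / (Nat.factorial (2*k+2)) := by
  have hs := Real.hasSum_cos x
  have hsum := hs.summable
  have h0 : Real.cos x
      = 1 + ∑' k : ℕ, (-1:ℝ)^(k+1) * x^(2*(k+1)) / (Nat.factorial (2*(k+1))) := by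
    rw [← hs.tsum_eq, Summable.tsum_eq_zero_add hsum]
    norm_num
  have h1 : ∀ k : ℕ, (-1:ℝ)^(k+1) * x^(2*(k+1)) / (Nat.factorial (2*(k+1)))
      = -((-1:ℝ)^k * x^(2*k+2) / (Nat.factorial (2*k+2))) := by
    intro k
    have : 2*(k+1) = 2*k+2 := by ring
    rw [this]; ring
  rw [h0, tsum_congr h1, tsum_neg]
  ring
lemma rpow_int_val (a : ℝ) (ha0 : 0 < a) (ha1 : a < 1) (k : ℕ) :
    ∫ u in Set.Ioc (0:ℝ) 1, u ^ ((2*k+1:ℝ) - a) = 1 / ((2*k+2:ℝ) - a) := by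
  have hr : (-1:ℝ) < (2*k+1:ℝ) - a := by
    have := Nat.cast_nonneg (α := ℝ) k; nlinarith
  rw [← intervalIntegral.integral_of_le zero_le_one, integral_rpow (Or.inl hr)]
  have h2 : ((2*k+1:ℝ) - a) + 1 ≠ 0 := by
    have := Nat.cast_nonneg (α := ℝ) k; intro h; nlinarith
  rw [Real.one_rpow, Real.zero_rpow h2]
  rw [show ((2*k+1:ℝ) - a) + 1 = (2*k+2:ℝ) - a by ring]
  ring

lemma integral_eq (a ω : ℝ) (ha0 : 0 < a) (ha1 : a < 1) :
    ∫ u in Set.Ioc (0:ℝ) 1, (1 - Real.cos (ω * u)) * u ^ (-a - 1)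
      = ∑' k : ℕ, (-1:ℝ)^k * ω^(2*k+2)
          / (Nat.factorial (2*k+2) * ((2*k+2:ℝ) - a)) := by
  set F : ℕ → ℝ → ℝ := fun k u =>
    ((-1:ℝ)^k * ω^(2*k+2) / (Nat.factorial (2*k+2))) * u ^ ((2*k+1:ℝ) - a) with hF
  have hr : ∀ k : ℕ, (-1:ℝ) < (2*k+1:ℝ) - a := by
    intro k; have := Nat.cast_nonneg (α := ℝ) k; nlinarith
  have hInt : ∀ k : ℕ, IntegrableOn (F k) (Set.Ioc (0:ℝ) 1) volume := by
    intro k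
    exact ((intervalIntegral.intervalIntegrable_rpow' (hr k)).const_mul _).1
  have hval : ∀ k : ℕ, ∫ u in Set.Ioc (0:ℝ) 1, F k u
      = (-1:ℝ)^k * ω^(2*k+2) / (Nat.factorial (2*k+2) * ((2*k+2:ℝ) - a)) := by
    intro k
    rw [hF]
    simp only []
    rw [integral_const_mul, rpow_int_val a ha0 ha1 k, div_mul_div_comm, mul_one]
  have habs : ∀ k : ℕ, |(-1:ℝ)^k * ω^(2*k+2) / (Nat.factorial (2*k+2))|
      = |ω|^(2*k+2) / (Nat.factorial (2*k+2)) := by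
    intro k
    rw [abs_div, abs_mul, _root_.abs_pow, _root_.abs_pow, abs_neg, abs_one, one_pow, one_mul,
      Nat.abs_cast]
  have hnormval : ∀ k : ℕ, (∫ u in Set.Ioc (0:ℝ) 1, ‖F k u‖)
      = |(-1:ℝ)^k * ω^(2*k+2) / (Nat.factorial (2*k+2))| / ((2*k+2:ℝ) - a) := by
    intro k
    rw [setIntegral_congr_fun measurableSet_Ioc
      (g := fun u => |(-1:ℝ)^k * ω^(2*k+2) / (Nat.factorial (2*k+2))| * u ^ ((2*k+1:ℝ) - a))]
    · rw [integral_const_mul, rpow_int_val a ha0 ha1 k]; ring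
    · intro u hu
      simp only [hF, Real.norm_eq_abs, abs_mul]
      rw [_root_.abs_of_nonneg (Real.rpow_nonneg (le_of_lt hu.1) _)]
  have hSum : Summable (fun k : ℕ => ∫ u in Set.Ioc (0:ℝ) 1, ‖F k u‖) := by
    have hg : Summable (fun k : ℕ => |ω|^(2*k+2) / (Nat.factorial (2*k+2))) :=
      (Real.summable_pow_div_factorial |ω|).comp_injective (fun x y h => by omega)
    have h1 : ∀ k : ℕ, 0 ≤ ∫ u in Set.Ioc (0:ℝ) 1, ‖F k u‖ :=
      fun k => integral_nonneg fun u => norm_nonneg _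
    have h2 : ∀ k : ℕ, (∫ u in Set.Ioc (0:ℝ) 1, ‖F k u‖)
        ≤ |ω|^(2*k+2) / (Nat.factorial (2*k+2)) := by
      intro k
      rw [hnormval k, habs k]
      apply div_le_self (div_nonneg (pow_nonneg (abs_nonneg _) _) (Nat.cast_nonneg _))
      have := Nat.cast_nonneg (α := ℝ) k; nlinarith
    exact Summable.of_nonneg_of_le h1 h2 hg
  have key := integral_tsum_of_summable_integral_norm
    (μ := volume.restrict (Set.Ioc (0:ℝ) 1)) hInt hSum
  have hpt : ∀ u ∈ Set.Ioc (0:ℝ) 1,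
      (1 - Real.cos (ω * u)) * u ^ (-a - 1) = ∑' k : ℕ, F k u := by
    intro u hu
    have hu0 : (0:ℝ) < u := hu.1
    have hFk : ∀ k : ℕ, F k u
        = ((-1:ℝ)^k * (ω*u)^(2*k+2) / (Nat.factorial (2*k+2))) * u ^ (-a-1) := by
      intro k
      have h1 : u ^ ((2*k+1:ℝ) - a) = u ^ (2*k+2 : ℕ) * u ^ (-a-1 : ℝ) := by
        rw [← Real.rpow_natCast u (2*k+2), ← Real.rpow_add hu0]
        congr 1
        push_cast; ring
      rw [hF]; simp only []
      rw [h1, mul_pow]; ring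
    rw [tsum_congr hFk, tsum_mul_right, ← one_sub_cos]
  rw [setIntegral_congr_fun measurableSet_Ioc hpt, ← key, tsum_congr hval]

lemma re_eq (a ω : ℝ) (ha0 : 0 < a) (ha1 : a < 1) :
    (confluentF a (Complex.I * (ω : ℂ))).re
      = 1 + a * ∑' k : ℕ, (-1:ℝ)^k * ω^(2*k+2)
          / (Nat.factorial (2*k+2) * ((2*k+2:ℝ) - a)) := by
  set z : ℂ := Complex.I * (ω : ℂ) with hz
  set t : ℕ → ℂ := fun n =>
    (ascPochhammer ℂ n).eval (-(a : ℂ)) / (ascPochhammer ℂ n).eval (1 - (a : ℂ))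
      * z ^ n / (Nat.factorial n : ℂ) with ht
  have ht0 : t 0 = 1 := by simp [ht, ascPochhammer_zero]
  have hB : ∀ n : ℕ, t (n+1)
      = ((-a / ((n:ℝ) + 1 - a) : ℝ) : ℂ) * z^(n+1) / ((Nat.factorial (n+1) : ℕ) : ℂ) := by
    intro n
    rw [ht]
    simp only []
    rw [poch_ratio a ha0 ha1 n]
    congr 2
    push_cast
    ring
  have hzn : ‖z‖ = |ω| := by
    rw [hz, norm_mul, Complex.norm_I, one_mul, Complex.norm_real, Real.norm_eq_abs]
  have hd : ∀ n : ℕ, (0:ℝ) < (n:ℝ) + 1 - a := by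
    intro n; have := Nat.cast_nonneg (α := ℝ) n; nlinarith
  have hsumt : Summable t := by
    set M : ℝ := max 1 (a / (1 - a)) with hM
    apply Summable.of_norm
    have hg : Summable (fun n : ℕ => M * (|ω|^n / (Nat.factorial n))) :=
      (Real.summable_pow_div_factorial |ω|).mul_left M
    refine Summable.of_nonneg_of_le (fun n => norm_nonneg _) (fun n => ?_) hg
    cases n with
    | zero =>
      rw [ht0]
      simp only [norm_one, pow_zero, Nat.factorial_zero, Nat.cast_one, div_one, mul_one]
      exact le_max_left _ _
    | succ n =>
      rw [hB n, norm_div, norm_mul, Complex.norm_real, Real.norm_eq_abs, norm_pow, hzn]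
      have h1 : |(-a / ((n:ℝ) + 1 - a))| ≤ M := by
        rw [abs_div, abs_neg, abs_of_pos ha0, abs_of_pos (hd n)]
        refine le_trans ?_ (le_max_right _ _)
        apply div_le_div_of_nonneg_left (le_of_lt ha0) (by linarith) ?_
        have := Nat.cast_nonneg (α := ℝ) n; linarith
      have h2 : ‖((Nat.factorial (n+1) : ℕ) : ℂ)‖ = (Nat.factorial (n+1) : ℝ) := by
        rw [Complex.norm_natCast]
      rw [h2, div_le_iff₀ (by positivity)]
      calc |(-a / ((n:ℝ) + 1 - a))| * |ω|^(n+1) ≤ M * |ω|^(n+1) := by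
            apply mul_le_mul_of_nonneg_right h1 (by positivity)
        _ = M * (|ω|^(n+1) / (Nat.factorial (n+1))) * (Nat.factorial (n+1)) := by
            field_simp
  have hre : (confluentF a z).re = ∑' n, (t n).re := Complex.re_tsum hsumt
  set s : ℕ → ℝ := fun n => (t n).re with hs
  have hsums : Summable s := hsumt.map Complex.reCLM Complex.reCLM.continuous
  have hzsq : z^2 = ((-(ω^2) : ℝ) : ℂ) := by
    rw [hz, mul_pow, Complex.I_sq]
    push_cast
    ring
  have hzeven : ∀ k : ℕ, z^(2*k) = (((-1:ℝ)^k * ω^(2*k) : ℝ) : ℂ) := by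
    intro k
    rw [pow_mul, hzsq, ← Complex.ofReal_pow]
    congr 1
    rw [pow_mul]
    ring
  have sodd : ∀ k : ℕ, s (2*k+1) = 0 := by
    intro k
    have h1 : t (2*k+1) = (((-a / ((2*k:ℝ) + 1 - a)) * ((-1:ℝ)^k * ω^(2*k)) * ω
        / (Nat.factorial (2*k+1)) : ℝ) : ℂ) * Complex.I := by
      rw [show 2*k+1 = (2*k)+1 from rfl, hB (2*k), pow_succ, hzeven k, hz]
      push_cast
      ring
    rw [hs]
    simp only []
    rw [h1, Complex.mul_I_re, Complex.ofReal_im, neg_zero]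
  have seven : ∀ k : ℕ, s (2*k+2)
      = a * ((-1:ℝ)^k * ω^(2*k+2) / (Nat.factorial (2*k+2) * ((2*k+2:ℝ) - a))) := by
    intro k
    have h2 : z^(2*k+2) = (((-1:ℝ)^(k+1) * ω^(2*(k+1)) : ℝ) : ℂ) := by
      rw [show 2*k+2 = 2*(k+1) by ring, hzeven (k+1)]
    have h1 : t (2*k+2) = (((-a / ((2*k+1:ℝ) + 1 - a)) * ((-1:ℝ)^(k+1) * ω^(2*(k+1)))
        / (Nat.factorial (2*k+2)) : ℝ) : ℂ) := by
      rw [show 2*k+2 = (2*k+1)+1 from rfl, hB (2*k+1), h2]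
      push_cast
      ring
    rw [hs]
    simp only []
    rw [h1, Complex.ofReal_re,
      show (2*(k:ℝ)+1+1-a) = 2*(k:ℝ)+2-a by ring,
      show 2*(k+1) = 2*k+2 by ring, ← div_div]
    ring
  have heq1 : ∑' k : ℕ, s (2*k+1) = 0 := by
    rw [tsum_congr sodd]; exact tsum_zero
  have hsevensum : Summable (fun k : ℕ => s (2*k)) :=
    hsums.comp_injective (fun x y h => by omega)
  have hsoddsum : Summable (fun k : ℕ => s (2*k+1)) :=
    hsums.comp_injective (fun x y h => by omega)
  have hsplit := tsum_even_add_odd hsevensum hsoddsum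
  have hs0 : s 0 = 1 := by rw [hs]; simp only []; rw [ht0]; simp
  have heven2 : ∑' k : ℕ, s (2*k)
      = 1 + ∑' k : ℕ, a * ((-1:ℝ)^k * ω^(2*k+2)
          / (Nat.factorial (2*k+2) * ((2*k+2:ℝ) - a))) := by
    rw [Summable.tsum_eq_zero_add hsevensum]
    have e1 : s (2*0) = 1 := by norm_num [hs0]
    have e2 : ∑' k : ℕ, s (2*(k+1)) = ∑' k : ℕ, a * ((-1:ℝ)^k * ω^(2*k+2)
        / (Nat.factorial (2*k+2) * ((2*k+2:ℝ) - a))) := by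
      apply tsum_congr
      intro k
      rw [show 2*(k+1) = 2*k+2 by ring, seven k]
    rw [e1, e2]
  rw [hre, ← hsplit, heq1, add_zero, heven2, tsum_mul_left]

/-- For `0 < a < 1` and real `ω`,
`Re ₁F₁(-a; 1-a; iω) = 1 + a ∫_0^1 (1 - cos(ωu)) u^{-a-1} du ≥ 1 > 0`, so
`₁F₁(-a; 1-a; iω) ≠ 0`. -/
theorem stmt8 (a ω : ℝ) (ha0 : 0 < a) (ha1 : a < 1) :
    (confluentF a (Complex.I * (ω : ℂ))).re
        = 1 + a * ∫ u in Set.Ioc (0:ℝ) 1, (1 - Real.cos (ω * u)) * u ^ (-a - 1) ∧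
    1 ≤ (confluentF a (Complex.I * (ω : ℂ))).re ∧
    confluentF a (Complex.I * (ω : ℂ)) ≠ 0 := by
  have h1 : (confluentF a (Complex.I * (ω : ℂ))).re
      = 1 + a * ∫ u in Set.Ioc (0:ℝ) 1, (1 - Real.cos (ω * u)) * u ^ (-a - 1) := by
    rw [re_eq a ω ha0 ha1, integral_eq a ω ha0 ha1]
  have hint : 0 ≤ ∫ u in Set.Ioc (0:ℝ) 1, (1 - Real.cos (ω * u)) * u ^ (-a - 1) := by
    apply setIntegral_nonneg measurableSet_Ioc
    intro u hu
    apply mul_nonneg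
    · nlinarith [Real.cos_le_one (ω * u)]
    · exact Real.rpow_nonneg (le_of_lt hu.1) _
  have h2 : 1 ≤ (confluentF a (Complex.I * (ω : ℂ))).re := by
    rw [h1]
    nlinarith
  refine ⟨h1, h2, fun h => ?_⟩
  rw [h] at h2
  simp at h2
  linarith
end
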